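/- arXiv:1711.00573 — 5 statements merged into one kernel-verified Lean document; each statement's English description precedes it below -/
import Mathlib

section
/- Let a ∈ ℝ and let D ≥ 1 be an integer. For every F ∈ 𝒫^D[a,∞), the D-th order right derivative of F tends to zero at infinity: lim_{x→∞} F_+^{(D)}(x) = 0. -/
open MeasureTheory Filter Set Topology

/-- The iterated (right) derivative: `rderiv F j` is the `j`-th order right derivative of `F`,
where the right derivative at `x` is the derivative within `Set.Ici x` at `x`. -/
noncomputable def rderiv (F : ℝ → ℝ) : ℕ → ℝ → ℝ
  | 0 => F
  | j + 1 => fun x => derivWithin (rderiv F j) (Set.Ici x) x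

/-- A probability distribution function on `ℝ`: nondecreasing, right-continuous,
with limit `0` at `-∞` and `1` at `+∞`. -/
structure IsCDF (F : ℝ → ℝ) : Prop where
  mono : Monotone F
  right_cont : ∀ x : ℝ, ContinuousWithinAt F (Set.Ici x) x
  tendsto_atBot : Filter.Tendsto F Filter.atBot (nhds 0)
  tendsto_atTop : Filter.Tendsto F Filter.atTop (nhds 1)

/-- Membership in `𝒫^D[a,∞)`: a probability distribution function that is `D-1` times
differentiable on `[a,∞)` (two-sided derivatives at interior points, right derivatives at the
boundary), whose `D`-th order right derivative exists (and is finite) on `[a,∞)`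
and is monotone there. -/
def MemPD (D : ℕ) (a : ℝ) (F : ℝ → ℝ) : Prop :=
  IsCDF F ∧
  (∀ j < D, ∀ x ∈ Set.Ici a, HasDerivWithinAt (rderiv F j) (rderiv F (j + 1) x) (Set.Ici x) x) ∧
  (∀ j : ℕ, j + 1 < D → ∀ x ∈ Set.Ioi a, HasDerivAt (rderiv F j) (rderiv F (j + 1) x) x) ∧
  (MonotoneOn (rderiv F D) (Set.Ici a) ∨ AntitoneOn (rderiv F D) (Set.Ici a))

/-- Core "rising sun" lemma: if `r` has positive right derivative on `[x0, y)` and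
satisfies a "no downward jump from the left" property, then `r y ≥ v` whenever `r x0 ≥ v`. -/
lemma core {r : ℝ → ℝ} {x0 y v : ℝ} (hxy : x0 ≤ y) (hv : v ≤ r x0)
    (hjump : ∀ z ∈ Set.Ioc x0 y, (∀ t ∈ Set.Ico x0 z, v ≤ r t) → v ≤ r z)
    (hd : ∀ t ∈ Set.Ico x0 y, ∃ d, 0 < d ∧ HasDerivWithinAt r d (Set.Ici t) t) :
    v ≤ r y := by
  set T : Set ℝ := {t | t ∈ Set.Icc x0 y ∧ ∀ s ∈ Set.Icc x0 t, v ≤ r s} with hT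
  have hx0T : x0 ∈ T := ⟨⟨le_refl _, hxy⟩, fun s hs => by
    have : s = x0 := le_antisymm hs.2 hs.1
    simpa [this] using hv⟩
  have hne : T.Nonempty := ⟨x0, hx0T⟩
  have hbdd : BddAbove T := ⟨y, fun t ht => ht.1.2⟩
  set z := sSup T with hz
  have hz1 : x0 ≤ z := le_csSup hbdd hx0T
  have hz2 : z ≤ y := csSup_le hne fun t ht => ht.1.2
  have hlow : ∀ s ∈ Set.Ico x0 z, v ≤ r s := by
    intro s hs
    obtain ⟨t, htT, hst⟩ := exists_lt_of_lt_csSup hne hs.2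
    exact htT.2 s ⟨hs.1, hst.le⟩
  have hrz : v ≤ r z := by
    rcases eq_or_lt_of_le hz1 with h | h
    · simpa [← h] using hv
    · exact hjump z ⟨h, hz2⟩ hlow
  have hzT : z ∈ T := ⟨⟨hz1, hz2⟩, fun s hs => by
    rcases eq_or_lt_of_le hs.2 with h | h
    · simpa [h] using hrz
    · exact hlow s ⟨hs.1, h⟩⟩
  rcases eq_or_lt_of_le hz2 with h | hzy
  · simpa [← h] using hrz
  · exfalso
    obtain ⟨d, hd0, hdw⟩ := hd z ⟨hz1, hzy⟩
    rw [hasDerivWithinAt_iff_tendsto_slope, Set.Ici_sdiff_left] at hdw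
    have hev : ∀ᶠ s in 𝓝[>] z, 0 < slope r z s := hdw.eventually (eventually_gt_nhds hd0)
    obtain ⟨b, hb, hsub⟩ := mem_nhdsGT_iff_exists_Ioo_subset.1 hev
    set t' := min ((z + b) / 2) y with ht'
    have hzt' : z < t' := lt_min (by linarith [hb.out]) hzy
    have ht'T : t' ∈ T := by
      refine ⟨⟨hz1.trans hzt'.le, min_le_right _ _⟩, fun s hs => ?_⟩
      rcases le_or_gt s z with h | h
      · exact hzT.2 s ⟨hs.1, h⟩
      · have hsb : s ∈ Set.Ioo z b := ⟨h, by
          have : s ≤ (z + b) / 2 := hs.2.trans (min_le_left _ _)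
          linarith [hb.out]⟩
        have hsl : 0 < slope r z s := hsub hsb
        rw [slope_def_field] at hsl
        have hpos : 0 < s - z := by linarith
        have hrs : r z < r s := by
          have := mul_pos hsl hpos
          rw [div_mul_cancel₀] at this
          · linarith
          · exact ne_of_gt hpos
        linarith
    have : t' ≤ z := le_csSup hbdd ht'T
    linarith

/-- Growth lemma: if `r` has right derivative `m t ≥ c > 0` on `[x0, ∞)` and the shifted
function `r - (c/2)·id` has the no-left-jump property, then `r → ∞`. -/
lemma growCore {r m : ℝ → ℝ} {x0 c : ℝ} (hc : 0 < c)
    (hm : ∀ t ∈ Set.Ici x0, HasDerivWithinAt r (m t) (Set.Ici t) t)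
    (hcb : ∀ t ∈ Set.Ici x0, c ≤ m t)
    (hjump : ∀ v y, x0 < y → ∀ z ∈ Set.Ioc x0 y,
      (∀ t ∈ Set.Ico x0 z, v ≤ r t - c / 2 * t) → v ≤ r z - c / 2 * z) :
    Filter.Tendsto r Filter.atTop Filter.atTop := by
  have key : ∀ y, x0 ≤ y → r x0 + c / 2 * (y - x0) ≤ r y := by
    intro y hy
    rcases eq_or_lt_of_le hy with rfl | hlt
    · simp
    · set r' : ℝ → ℝ := fun t => r t - c / 2 * t with hr'
      have hd : ∀ t ∈ Set.Ico x0 y, ∃ d, 0 < d ∧ HasDerivWithinAt r' d (Set.Ici t) t := by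
        intro t ht
        refine ⟨m t - c / 2, by linarith [hcb t ht.1], ?_⟩
        have h2 : HasDerivWithinAt (fun s => c / 2 * s) (c / 2) (Set.Ici t) t := by
          simpa using ((hasDerivAt_id t).const_mul (c / 2)).hasDerivWithinAt
        exact (hm t ht.1).sub h2
      have := core (r := r') hlt.le le_rfl (hjump (r' x0) y hlt) hd
      simp only [hr'] at this
      linarith
  have haff : Filter.Tendsto (fun y => r x0 + c / 2 * (y - x0)) Filter.atTop Filter.atTop := by
    apply tendsto_atTop_add_const_left
    exact (tendsto_atTop_add_const_right atTop (-x0) tendsto_id).const_mul_atTop (by linarith)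
  exact tendsto_atTop_mono' atTop ((eventually_ge_atTop x0).mono key) haff

/-- Growth from a monotone function with positive right derivative. -/
lemma growMono {r m : ℝ → ℝ} {x0 c : ℝ} (hc : 0 < c) (hmono : Monotone r)
    (hm : ∀ t ∈ Set.Ici x0, HasDerivWithinAt r (m t) (Set.Ici t) t)
    (hcb : ∀ t ∈ Set.Ici x0, c ≤ m t) :
    Filter.Tendsto r Filter.atTop Filter.atTop := by
  refine growCore hc hm hcb ?_
  intro v y hy z hz h
  refine le_of_forall_pos_le_add fun ε hε => ?_
  set t := max x0 (z - 2 * ε / c) with htdef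
  have htz : t < z := max_lt hz.1 (by
    have : 0 < 2 * ε / c := by positivity
    linarith)
  have hvt := h t ⟨le_max_left _ _, htz⟩
  have hrt : r t ≤ r z := hmono htz.le
  have hzt : z - t ≤ 2 * ε / c := by
    have : z - 2 * ε / c ≤ t := le_max_right _ _
    linarith
  have : c / 2 * (z - t) ≤ ε := by
    rw [div_mul_eq_mul_div, div_le_iff₀ (by norm_num : (0:ℝ) < 2)] at *
    calc c * (z - t) ≤ c * (2 * ε / c) := by
          exact mul_le_mul_of_nonneg_left hzt hc.le
      _ = ε * 2 := by field_simp
  linarith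

/-- Growth from Darboux: `r` is a derivative of `P`. -/
lemma growDarboux {P r m : ℝ → ℝ} {x0 c : ℝ} (hc : 0 < c)
    (hP : ∀ t ∈ Set.Ici x0, HasDerivAt P (r t) t)
    (hm : ∀ t ∈ Set.Ici x0, HasDerivWithinAt r (m t) (Set.Ici t) t)
    (hcb : ∀ t ∈ Set.Ici x0, c ≤ m t) :
    Filter.Tendsto r Filter.atTop Filter.atTop := by
  refine growCore hc hm hcb ?_
  intro v y hy z hz h
  by_contra hlt
  push_neg at hlt
  have hvx0 : v ≤ r x0 - c / 2 * x0 := h x0 ⟨le_rfl, hz.1⟩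
  set u := (v + (r z - c / 2 * z)) / 2 with hu
  have hu1 : r z - c / 2 * z < u := by rw [hu]; linarith
  have hu2 : u < v := by rw [hu]; linarith
  set r' : ℝ → ℝ := fun t => r t - c / 2 * t with hr'
  have hP' : ∀ t ∈ Set.Icc x0 z, HasDerivWithinAt (fun s => P s - c / 4 * s ^ 2)
      (r' t) (Set.Icc x0 z) t := by
    intro t ht
    have h1 : HasDerivAt (fun s => c / 4 * s ^ 2) (c / 4 * (2 * t)) t := by
      simpa using (hasDerivAt_pow 2 t).const_mul (c / 4)
    have h2 : HasDerivAt (fun s => P s - c / 4 * s ^ 2) (r t - c / 4 * (2 * t)) t :=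
      (hP t ht.1).sub h1
    have heq : r t - c / 4 * (2 * t) = r' t := by rw [hr']; ring
    rw [heq] at h2
    exact h2.hasDerivWithinAt
  have hdar := exists_hasDerivWithinAt_eq_of_lt_of_gt (le_of_lt hz.1) hP'
    (m := u) (by simpa [hr'] using lt_of_lt_of_le hu2 hvx0) (by simpa [hr'] using hu1)
  obtain ⟨s, hs, hsu⟩ := hdar
  have := h s ⟨hs.1.le, hs.2⟩
  simp only [hr'] at hsu
  linarith

/-- Growth from continuity (two-sided differentiability), via MVT. -/
lemma growCont {p q : ℝ → ℝ} {x0 c : ℝ} (hc : 0 < c)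
    (hp : ∀ t ∈ Set.Ici x0, HasDerivAt p (q t) t)
    (hq : ∀ t ∈ Set.Ici x0, c ≤ q t) :
    Filter.Tendsto p Filter.atTop Filter.atTop := by
  have key : ∀ y, x0 ≤ y → p x0 + c * (y - x0) ≤ p y := by
    intro y hy
    rcases eq_or_lt_of_le hy with rfl | hlt
    · simp
    · have hcont : ContinuousOn p (Set.Icc x0 y) := fun t ht =>
        (hp t ht.1).continuousAt.continuousWithinAt
      obtain ⟨ξ, hξ, hslope⟩ := exists_hasDerivAt_eq_slope p q hlt hcont
        (fun t ht => hp t ht.1.le)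
      have hξc := hq ξ hξ.1.le
      rw [hslope] at hξc
      rw [le_div_iff₀ (by linarith)] at hξc
      linarith
  have haff : Filter.Tendsto (fun y => p x0 + c * (y - x0)) Filter.atTop Filter.atTop := by
    apply tendsto_atTop_add_const_left
    exact (tendsto_atTop_add_const_right atTop (-x0) tendsto_id).const_mul_atTop hc
  exact tendsto_atTop_mono' atTop ((eventually_ge_atTop x0).mono key) haff

lemma rderiv_neg (F : ℝ → ℝ) : ∀ j x, rderiv (fun y => -F y) j x = -rderiv F j x := by
  intro j
  induction j with
  | zero => intro x; rfl
  | succ n ih =>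
    intro x
    have hfun : rderiv (fun y => -F y) n = fun y => -rderiv F n y := funext ih
    show derivWithin (rderiv (fun y => -F y) n) (Set.Ici x) x = _
    rw [hfun]
    have : derivWithin (fun y => -rderiv F n y) (Set.Ici x) x
        = -derivWithin (rderiv F n) (Set.Ici x) x :=
      derivWithin.neg
    rw [this]; rfl

lemma H_neg {D : ℕ} {a : ℝ} {F : ℝ → ℝ}
    (H1 : ∀ j < D, ∀ x ∈ Set.Ici a,
      HasDerivWithinAt (rderiv F j) (rderiv F (j + 1) x) (Set.Ici x) x)
    (H2 : ∀ j : ℕ, j + 1 < D → ∀ x ∈ Set.Ioi a, HasDerivAt (rderiv F j) (rderiv F (j + 1) x) x) :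
    (∀ j < D, ∀ x ∈ Set.Ici a, HasDerivWithinAt (rderiv (fun y => -F y) j)
        (rderiv (fun y => -F y) (j + 1) x) (Set.Ici x) x) ∧
    (∀ j : ℕ, j + 1 < D → ∀ x ∈ Set.Ioi a, HasDerivAt (rderiv (fun y => -F y) j)
        (rderiv (fun y => -F y) (j + 1) x) x) := by
  have hfun : ∀ j, rderiv (fun y => -F y) j = fun y => -rderiv F j y :=
    fun j => funext (rderiv_neg F j)
  constructor
  · intro j hj x hx
    rw [hfun j, rderiv_neg F (j + 1) x]
    exact (H1 j hj x hx).neg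
  · intro j hj x hx
    rw [hfun j, rderiv_neg F (j + 1) x]
    exact (H2 j hj x hx).neg

lemma mono_rderiv_nonneg {F : ℝ → ℝ} (hF : Monotone F) {x d : ℝ}
    (h : HasDerivWithinAt F d (Set.Ici x) x) : 0 ≤ d := by
  rw [hasDerivWithinAt_iff_tendsto_slope, Set.Ici_sdiff_left] at h
  refine ge_of_tendsto h ?_
  filter_upwards [self_mem_nhdsWithin] with s hs
  rw [slope_def_field]
  exact div_nonneg (by linarith [hF (le_of_lt hs)]) (by linarith [hs.out])

/-- Escape lemma for `D = k + 2`: if the top right derivative is bounded below by `c > 0`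
beyond `x0 > a`, then `F → ∞`. -/
lemma escape2 {k : ℕ} {a : ℝ} {F : ℝ → ℝ}
    (H1 : ∀ j < k + 2, ∀ x ∈ Set.Ici a,
      HasDerivWithinAt (rderiv F j) (rderiv F (j + 1) x) (Set.Ici x) x)
    (H2 : ∀ j : ℕ, j + 1 < k + 2 → ∀ x ∈ Set.Ioi a,
      HasDerivAt (rderiv F j) (rderiv F (j + 1) x) x)
    {c x0 : ℝ} (hc : 0 < c) (hx0 : a < x0)
    (hbd : ∀ t, x0 ≤ t → c ≤ rderiv F (k + 2) t) :
    Filter.Tendsto F Filter.atTop Filter.atTop := by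
  have top : Filter.Tendsto (rderiv F (k + 1)) Filter.atTop Filter.atTop := by
    refine growDarboux (P := rderiv F k) (m := rderiv F (k + 2)) hc ?_ ?_
      (fun t ht => hbd t ht)
    · intro t ht
      exact H2 k (by omega) t (lt_of_lt_of_le hx0 ht)
    · intro t ht
      exact H1 (k + 1) (by omega) t (le_trans hx0.le ht)
  have chain : ∀ i, i ≤ k + 1 →
      Filter.Tendsto (rderiv F (k + 1 - i)) Filter.atTop Filter.atTop := by
    intro i
    induction i with
    | zero => intro _; simpa using top
    | succ n ih =>
      intro hn1
      have hprev := ih (by omega)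
      have heq : k + 1 - n = (k + 1 - (n + 1)) + 1 := by omega
      rw [heq] at hprev
      obtain ⟨x1, hx1⟩ := eventually_atTop.1 (tendsto_atTop.1 hprev 1)
      refine growCont (q := rderiv F ((k + 1 - (n + 1)) + 1)) (x0 := max x1 (a + 1))
        one_pos ?_ ?_
      · intro t ht
        refine H2 (k + 1 - (n + 1)) (by omega) t ?_
        have : a + 1 ≤ t := le_trans (le_max_right _ _) ht
        simpa using by linarith
      · intro t ht
        exact hx1 t (le_trans (le_max_left _ _) ht)
  have := chain (k + 1) le_rfl
  rw [Nat.sub_self] at this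
  exact this

/-- Main lemma for `D = k + 2` when the top right derivative is monotone nondecreasing. -/
lemma main_mono {k : ℕ} {a : ℝ} {F : ℝ → ℝ}
    (H1 : ∀ j < k + 2, ∀ x ∈ Set.Ici a,
      HasDerivWithinAt (rderiv F j) (rderiv F (j + 1) x) (Set.Ici x) x)
    (H2 : ∀ j : ℕ, j + 1 < k + 2 → ∀ x ∈ Set.Ioi a,
      HasDerivAt (rderiv F j) (rderiv F (j + 1) x) x)
    (hmono : MonotoneOn (rderiv F (k + 2)) (Set.Ici a))
    (hFup : ¬ Filter.Tendsto F Filter.atTop Filter.atTop)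
    (hFdn : ¬ Filter.Tendsto (fun y => -F y) Filter.atTop Filter.atTop) :
    Filter.Tendsto (rderiv F (k + 2)) Filter.atTop (nhds 0) := by
  by_cases hex : ∃ x1, a < x1 ∧ 0 < rderiv F (k + 2) x1
  · obtain ⟨x1, hax1, hpos⟩ := hex
    exact absurd (escape2 H1 H2 hpos hax1
      (fun t ht => hmono hax1.le (hax1.le.trans ht) ht)) hFup
  · push_neg at hex
    set m := rderiv F (k + 2) with hm
    set g : ℝ → ℝ := fun x => m (max x (a + 1)) with hg
    have hmax : ∀ x : ℝ, a ≤ max x (a + 1) :=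
      fun x => le_trans (by linarith) (le_max_right x (a + 1))
    have hgmono : Monotone g := fun x y hxy => hmono (hmax x) (hmax y) (max_le_max hxy le_rfl)
    have hgle : ∀ x, g x ≤ 0 :=
      fun x => hex _ (lt_of_lt_of_le (lt_add_one a) (le_max_right _ _))
    have hbdd : BddAbove (Set.range g) := by
      refine ⟨0, ?_⟩
      rintro v ⟨x, rfl⟩
      exact hgle x
    have htend : Filter.Tendsto g Filter.atTop (nhds (⨆ x, g x)) :=
      tendsto_atTop_ciSup hgmono hbdd
    set L := ⨆ x, g x with hL
    have hL0 : L ≤ 0 := ciSup_le hgle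
    have hgm : g =ᶠ[Filter.atTop] m := by
      filter_upwards [eventually_ge_atTop (a + 1)] with x hx
      rw [hg]
      simp [max_eq_left hx]
    rcases hL0.lt_or_eq with hLneg | hLzero
    · exfalso
      have hub : ∀ t, a + 1 ≤ t → m t ≤ L := by
        intro t ht
        have h1 : m (max t (a + 1)) ≤ L := le_ciSup hbdd t
        rwa [max_eq_left ht] at h1
      obtain ⟨HG1, HG2⟩ := H_neg H1 H2
      refine hFdn (escape2 HG1 HG2 (c := -L) (x0 := a + 1) (by linarith) (by linarith) ?_)
      intro t ht
      rw [rderiv_neg F (k + 2) t]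
      linarith [hub t ht]
    · have := htend.congr' hgm
      rwa [hLzero] at this

/-- For `D ≥ 1` and `F ∈ 𝒫^D[a,∞)`, the `D`-th order right derivative of `F`
tends to `0` at `+∞`. -/
theorem stmt_0 (D : ℕ) (hD : 1 ≤ D) (a : ℝ) (F : ℝ → ℝ) (hF : MemPD D a F) :
    Filter.Tendsto (rderiv F D) Filter.atTop (nhds 0) := by
  obtain ⟨hcdf, H1, H2, hmono⟩ := hF
  have hup : ¬ Filter.Tendsto F Filter.atTop Filter.atTop := by
    intro h
    obtain ⟨x, hx1, hx2⟩ := ((hcdf.tendsto_atTop.eventually_lt_const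
      (by norm_num : (1:ℝ) < 2)).and (tendsto_atTop.1 h 2)).exists
    linarith
  have hdn : ¬ Filter.Tendsto (fun y => -F y) Filter.atTop Filter.atTop := by
    intro h
    obtain ⟨x, hx1, hx2⟩ := ((hcdf.tendsto_atTop.eventually_const_lt
      (by norm_num : (0:ℝ) < 1)).and (tendsto_atTop.1 h 0)).exists
    linarith
  rcases Nat.lt_or_ge D 2 with hD2 | hD2
  · -- D = 1
    have hD1 : D = 1 := by omega
    subst hD1
    have hm0 : ∀ x, a ≤ x → 0 ≤ rderiv F 1 x := fun x hx =>
      mono_rderiv_nonneg hcdf.mono (H1 0 (by norm_num) x hx)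
    have hd0 : ∀ t ∈ Set.Ici a, HasDerivWithinAt F (rderiv F 1 t) (Set.Ici t) t :=
      fun t ht => H1 0 (by norm_num) t ht
    rcases hmono with hmon | hant
    · by_cases hex : ∃ x1, a ≤ x1 ∧ 0 < rderiv F 1 x1
      · obtain ⟨x1, hax1, hpos⟩ := hex
        exfalso
        apply hup
        refine growMono (m := rderiv F 1) (x0 := x1) hpos hcdf.mono ?_ ?_
        · intro t ht
          exact hd0 t (le_trans hax1 ht)
        · intro t ht
          exact hmon hax1 (hax1.trans ht) ht
      · push_neg at hex
        have heq0 : ∀ᶠ x in Filter.atTop, rderiv F 1 x = 0 := by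
          filter_upwards [eventually_ge_atTop a] with x hx
          exact le_antisymm (hex x hx) (hm0 x hx)
        refine Filter.Tendsto.congr' ?_ tendsto_const_nhds
        filter_upwards [heq0] with x hx
        exact hx.symm
    · set g : ℝ → ℝ := fun x => rderiv F 1 (max x (a + 1)) with hg
      have hmax : ∀ x : ℝ, a ≤ max x (a + 1) :=
        fun x => le_trans (by linarith) (le_max_right x (a + 1))
      have hgant : Antitone g := fun x y hxy => hant (hmax x) (hmax y) (max_le_max hxy le_rfl)
      have hgge : ∀ x, 0 ≤ g x := fun x => hm0 _ (hmax x)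
      have hbdd : BddBelow (Set.range g) := by
        refine ⟨0, ?_⟩
        rintro v ⟨x, rfl⟩
        exact hgge x
      have htend : Filter.Tendsto g Filter.atTop (nhds (⨅ x, g x)) :=
        tendsto_atTop_ciInf hgant hbdd
      set L := ⨅ x, g x with hL
      have hL0 : 0 ≤ L := le_ciInf hgge
      have hgm : g =ᶠ[Filter.atTop] rderiv F 1 := by
        filter_upwards [eventually_ge_atTop (a + 1)] with x hx
        rw [hg]
        simp [max_eq_left hx]
      rcases hL0.lt_or_eq with hLpos | hLzero
      · exfalso
        apply hup
        have hlb : ∀ t, a + 1 ≤ t → L ≤ rderiv F 1 t := by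
          intro t ht
          have h1 : L ≤ rderiv F 1 (max t (a + 1)) := ciInf_le hbdd t
          rwa [max_eq_left ht] at h1
        refine growMono (m := rderiv F 1) (x0 := a + 1) hLpos hcdf.mono ?_ hlb
        intro t ht
        exact hd0 t (le_trans (by linarith : a ≤ a + 1) ht)
      · have := htend.congr' hgm
        rwa [← hLzero] at this
  · -- D ≥ 2
    obtain ⟨k, rfl⟩ : ∃ k, D = k + 2 := ⟨D - 2, by omega⟩
    rcases hmono with hmon | hant
    · exact main_mono H1 H2 hmon hup hdn
    · obtain ⟨HG1, HG2⟩ := H_neg H1 H2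
      have hGmon : MonotoneOn (rderiv (fun y => -F y) (k + 2)) (Set.Ici a) := by
        intro x hx y hy hxy
        rw [rderiv_neg F (k + 2) x, rderiv_neg F (k + 2) y]
        exact neg_le_neg (hant hx hy hxy)
      have hGdn : ¬ Filter.Tendsto (fun y => -(fun y => -F y) y) Filter.atTop Filter.atTop := by
        have heq : (fun y => -(fun y => -F y) y) = F := funext fun y => neg_neg (F y)
        rw [heq]
        exact hup
      have hGtend := main_mono HG1 HG2 hGmon hdn hGdn
      have h2 : Filter.Tendsto (fun x => -rderiv (fun y => -F y) (k + 2) x)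
          Filter.atTop (nhds 0) := by
        simpa using hGtend.neg
      refine h2.congr fun x => ?_
      rw [rderiv_neg F (k + 2) x]
      ring
end

section
/- Let a ∈ ℝ and let D ≥ 1 be an integer. Then 𝒫^D[a,∞) ⊆ 𝒫^{D−1}[a,∞); that is, if F ∈ 𝒫^D[a,∞), then F is D−2 times differentiable with finite monotone (D−1)-th right derivative on [a,∞) (for D = 1, this says F itself is monotone, i.e. F ∈ 𝒫^0[a,∞)). Consequently 𝒫^D[a,∞) ⊆ 𝒫^{D−1}[a,∞) ⊆ … ⊆ 𝒫^0[a,∞). -/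
open MeasureTheory Filter Set Topology

/-- Maximum principle / convexity lemma: if `f` has derivative `g` on `Ici b` (two-sided in
the interior), and `g` has nonnegative right derivative `φ` everywhere on `Ici b`, then `f`
lies below its chords. -/
private lemma below_chord (b : ℝ) (f g φ : ℝ → ℝ)
    (hfc : ContinuousOn f (Ici b))
    (hfd : ∀ x ∈ Ioi b, HasDerivAt f (g x) x)
    (hgr : ∀ x ∈ Ici b, HasDerivWithinAt g (φ x) (Ici x) x)
    (hφ : ∀ x ∈ Ici b, 0 ≤ φ x)
    {x y : ℝ} (hbx : b ≤ x) (hxy : x < y) :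
    ∀ t ∈ Ioo x y, f t ≤ f x + (f y - f x) / (y - x) * (t - x) := by
  intro t₀ ht₀
  by_contra hcon
  push_neg at hcon
  set S := (f y - f x) / (y - x) with hS
  have ht₀x : 0 < t₀ - x := sub_pos.2 ht₀.1
  have hyt₀ : 0 < y - t₀ := sub_pos.2 ht₀.2
  have hnum : 0 < f t₀ - (f x + S * (t₀ - x)) := sub_pos.2 hcon
  set ε := (f t₀ - (f x + S * (t₀ - x))) / (2 * ((t₀ - x) * (y - t₀))) with hε
  have hεpos : 0 < ε := by
    apply div_pos hnum; positivity
  set w : ℝ → ℝ := fun t => f t - (f x + S * (t - x)) - ε * ((t - x) * (y - t)) with hw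
  have hwx : w x = 0 := by simp [hw]
  have hwy : w y = 0 := by
    have hyx : y - x ≠ 0 := ne_of_gt (by linarith)
    simp only [hw, hS]
    field_simp
    ring
  have hwt₀ : 0 < w t₀ := by
    have hεd : ε * ((t₀ - x) * (y - t₀)) = (f t₀ - (f x + S * (t₀ - x))) / 2 := by
      rw [hε]; field_simp
    simp only [hw]
    rw [hεd]
    linarith
  have hIcc : Icc x y ⊆ Ici b := fun t ht => le_trans hbx ht.1
  have hwc : ContinuousOn w (Icc x y) := by
    apply ContinuousOn.sub
    apply ContinuousOn.sub (hfc.mono hIcc)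
    · exact (Continuous.continuousOn (by fun_prop))
    · exact (Continuous.continuousOn (by fun_prop))
  obtain ⟨s, hsmem, hsmax⟩ :=
    isCompact_Icc.exists_isMaxOn (nonempty_Icc.2 hxy.le) hwc
  have hws : 0 < w s := lt_of_lt_of_le hwt₀ (hsmax (Ioo_subset_Icc_self ht₀))
  have hsx : x < s := lt_of_le_of_ne hsmem.1 (fun h => by rw [← h] at hws; linarith [hwx])
  have hsy : s < y := lt_of_le_of_ne hsmem.2 (fun h => by rw [h] at hws; linarith [hwy])
  have hsb : b < s := lt_of_le_of_lt hbx hsx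
  -- derivative of w in the interior
  set W : ℝ → ℝ := fun t => g t - S - ε * (1 * (y - t) + (t - x) * (-1)) with hW
  have hwd : ∀ t ∈ Ioi b, HasDerivAt w (W t) t := by
    intro t ht
    have h1 : HasDerivAt (fun t : ℝ => t - x) 1 t := (hasDerivAt_id t).sub_const x
    have h2 : HasDerivAt (fun t : ℝ => y - t) (-1) t := (hasDerivAt_id t).const_sub y
    have h3 : HasDerivAt (fun t : ℝ => (t - x) * (y - t)) (1 * (y - t) + (t - x) * (-1)) t :=
      h1.mul h2
    have h4 : HasDerivAt (fun t : ℝ => f x + S * (t - x)) (S * 1) t :=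
      (h1.const_mul S).const_add (f x)
    have h5 := ((hfd t ht).sub h4).sub (h3.const_mul ε)
    refine h5.congr_deriv ?_
    simp only [hW]; ring
  have hsloc : IsLocalMax w s := hsmax.isLocalMax (Icc_mem_nhds hsx hsy)
  have hW0 : W s = 0 := hsloc.hasDerivAt_eq_zero (hwd s hsb)
  -- right derivative of W at s is positive
  have hWd : HasDerivWithinAt W (φ s + 2 * ε) (Ici s) s := by
    have ha : HasDerivAt (fun t : ℝ => 1 * (y - t) + (t - x) * (-1)) (-2) s := by
      have hb : HasDerivAt (fun t : ℝ => y - t) (-1) s := (hasDerivAt_id s).const_sub y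
      have hc : HasDerivAt (fun t : ℝ => t - x) 1 s := (hasDerivAt_id s).sub_const x
      have := (hb.const_mul (1:ℝ)).add (hc.mul_const (-1))
      exact this.congr_deriv (by ring)
    have h2 := ((hgr s hsb.le).sub_const S).sub ((ha.const_mul ε).hasDerivWithinAt)
    refine h2.congr_deriv ?_
    ring
  -- W is positive just to the right of s
  have hslope := hasDerivWithinAt_iff_tendsto_slope.mp hWd
  rw [Set.Ici_sdiff_left] at hslope
  have hppos : 0 < φ s + 2 * ε := by have := hφ s (hbx.trans hsx.le); linarith
  have hev : ∀ᶠ t in 𝓝[>] s, 0 < slope W s t := hslope.eventually (eventually_gt_nhds hppos)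
  obtain ⟨u, hu, husub⟩ := mem_nhdsGT_iff_exists_Ioo_subset.mp hev
  have hWpos : ∀ t ∈ Ioo s u, 0 < W t := by
    intro t ht
    have h1 : 0 < slope W s t := husub ht
    rw [slope_def_field, hW0, sub_zero] at h1
    have h2 : 0 < t - s := sub_pos.2 ht.1
    have := mul_pos h1 h2
    rwa [div_mul_cancel₀ _ (ne_of_gt h2)] at this
  -- contradiction: w increases strictly to the right of its max
  set r := min u y with hr
  have hsr : s < r := lt_min hu hsy
  set t₂ := (s + r) / 2 with ht₂def
  have hst₂ : s < t₂ := by simp only [ht₂def]; linarith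
  have ht₂r : t₂ < r := by simp only [ht₂def]; linarith
  have ht₂y : t₂ ≤ y := le_of_lt (lt_of_lt_of_le ht₂r (min_le_right u y))
  have ht₂u : t₂ < u := lt_of_lt_of_le ht₂r (min_le_left u y)
  have hsub2 : Icc s t₂ ⊆ Icc x y := Icc_subset_Icc hsmem.1 ht₂y
  have hmono : StrictMonoOn w (Icc s t₂) := by
    apply strictMonoOn_of_deriv_pos (convex_Icc s t₂) (hwc.mono hsub2)
    intro t ht
    rw [interior_Icc] at ht
    rw [(hwd t (lt_trans hsb ht.1)).deriv]
    exact hWpos t ⟨ht.1, lt_trans ht.2 ht₂u⟩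
  have hlt2 : w s < w t₂ :=
    hmono (left_mem_Icc.2 hst₂.le) (right_mem_Icc.2 hst₂.le) hst₂
  have : w t₂ ≤ w s := hsmax (hsub2 (right_mem_Icc.2 hst₂.le))
  linarith


/-- If `f` has derivative `g` (right derivative at every point of `Ici b`, two-sided in the
interior) and `g` has a nonnegative right derivative everywhere, then `g` is monotone. -/
private lemma mono_of_rderiv_nonneg (b : ℝ) (f g φ : ℝ → ℝ)
    (hfc : ContinuousOn f (Ici b))
    (hfd : ∀ x ∈ Ioi b, HasDerivAt f (g x) x)
    (hfr : ∀ x ∈ Ici b, HasDerivWithinAt f (g x) (Ici x) x)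
    (hgr : ∀ x ∈ Ici b, HasDerivWithinAt g (φ x) (Ici x) x)
    (hφ : ∀ x ∈ Ici b, 0 ≤ φ x) :
    MonotoneOn g (Ici b) := by
  intro x hx y hy hxy
  rcases eq_or_lt_of_le hxy with rfl | hlt
  · exact le_refl _
  have chord := below_chord b f g φ hfc hfd hgr hφ hx hlt
  set S := (f y - f x) / (y - x) with hSdef
  have hSxy : S * (y - x) = f y - f x := div_mul_cancel₀ _ (ne_of_gt (sub_pos.2 hlt))
  have hgx : g x ≤ S := by
    have hsl := hasDerivWithinAt_iff_tendsto_slope.mp (hfr x hx)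
    rw [Set.Ici_sdiff_left] at hsl
    refine le_of_tendsto hsl ?_
    filter_upwards [Ioo_mem_nhdsGT_of_mem ⟨le_refl x, hlt⟩] with t ht
    rw [slope_def_field, div_le_iff₀ (sub_pos.2 ht.1)]
    have := chord t ht
    linarith
  have hgy : S ≤ g y := by
    have h2 : HasDerivWithinAt f (g y) (Iic y) y :=
      (hfd y (lt_of_le_of_lt hx hlt)).hasDerivWithinAt
    have hsl := hasDerivWithinAt_iff_tendsto_slope.mp h2
    rw [Set.Iic_diff_right] at hsl
    refine ge_of_tendsto hsl ?_
    filter_upwards [Ioo_mem_nhdsLT_of_mem ⟨hlt, le_refl y⟩] with t ht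
    rw [slope_def_field, le_div_iff_of_neg (sub_neg.2 ht.2)]
    have h3 := chord t ht
    have h4 : S * (t - x) = S * (t - y) + S * (y - x) := by ring
    linarith
  linarith

/-- Quantitative growth from a derivative lower bound. -/
private lemma grow (x c : ℝ) (u v : ℝ → ℝ) (hu : ContinuousOn u (Ici x))
    (hud : ∀ y ∈ Ioi x, HasDerivAt u (v y) y)
    (hv : ∀ y ∈ Ioi x, c ≤ v y) :
    ∀ y, x ≤ y → c * (y - x) ≤ u y - u x := by
  intro y hy
  refine (convex_Ici x).mul_sub_le_image_sub_of_le_deriv hu ?_ ?_ x self_mem_Ici y hy hy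
  · intro t ht
    rw [interior_Ici] at ht
    exact (hud t ht).differentiableAt.differentiableWithinAt
  · intro t ht
    rw [interior_Ici] at ht
    rw [(hud t ht).deriv]
    exact hv t ht

private lemma rderiv_contOn (a : ℝ) (F : ℝ → ℝ) (D j : ℕ) (hj : j + 1 < D)
    (H1 : ∀ j < D, ∀ x ∈ Set.Ici a, HasDerivWithinAt (rderiv F j) (rderiv F (j + 1) x) (Set.Ici x) x)
    (H2 : ∀ j : ℕ, j + 1 < D → ∀ x ∈ Set.Ioi a, HasDerivAt (rderiv F j) (rderiv F (j + 1) x) x)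
    (x : ℝ) (hx : a ≤ x) : ContinuousOn (rderiv F j) (Ici x) := by
  intro t ht
  rcases eq_or_lt_of_le (le_trans hx ht) with h | h
  · have hxa : x = a := le_antisymm (le_trans ht (le_of_eq h.symm)) hx
    subst hxa
    have ht' : t = x := le_antisymm (le_of_eq h.symm) ht
    subst ht'
    exact (H1 j (by omega) t self_mem_Ici).continuousWithinAt
  · exact (H2 j hj t h).continuousAt.continuousWithinAt

private lemma blowup (a : ℝ) (F : ℝ → ℝ) (k : ℕ) (hF : MemPD (k+2) a F)
    (σ : ℝ) (hσ : σ = 1 ∨ σ = -1)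
    (x₀ : ℝ) (hx₀ : a ≤ x₀) (c : ℝ) (hc : 0 < c)
    (hsign : ∀ y, x₀ ≤ y → c ≤ σ * rderiv F (k+2) y) : False := by
  obtain ⟨hcdf, H1, H2, -⟩ := hF
  -- Step 1: `σ * rderiv F (k+1)` grows at least linearly beyond `x₀`, via the
  -- convexity lemma applied to shifted functions.
  have hEtop : ∀ B : ℝ, ∃ x, a ≤ x ∧ ∀ y, x ≤ y → B ≤ σ * rderiv F (k+1) y := by
    have hsq : ∀ t : ℝ, HasDerivAt (fun t : ℝ => c / 2 * (t * t)) (c * t) t := by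
      intro t
      have := ((hasDerivAt_id t).mul (hasDerivAt_id t)).const_mul (c/2)
      refine this.congr_deriv ?_
      simp only [id_eq]; ring
    have hlin : ∀ t : ℝ, HasDerivAt (fun t : ℝ => c * t) c t := by
      intro t
      simpa using (hasDerivAt_id t).const_mul c
    have hmono := mono_of_rderiv_nonneg x₀
      (fun t => σ * rderiv F k t - c / 2 * (t * t))
      (fun t => σ * rderiv F (k+1) t - c * t)
      (fun t => σ * rderiv F (k+2) t - c)
      (((rderiv_contOn a F (k+2) k (by omega) H1 H2 x₀ hx₀).const_smul σ).sub
        (Continuous.continuousOn (by fun_prop)))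
      (fun t ht => (((H2 k (by omega) t (lt_of_le_of_lt hx₀ ht)).const_mul σ)).sub (hsq t))
      (fun t ht => (((H1 k (by omega) t (le_trans hx₀ ht)).const_mul σ)).sub
        ((hsq t).hasDerivWithinAt))
      (fun t ht => (((H1 (k+1) (by omega) t (le_trans hx₀ ht)).const_mul σ)).sub
        ((hlin t).hasDerivWithinAt))
      (fun t ht => sub_nonneg.2 (hsign t ht))
    intro B
    refine ⟨max x₀ (x₀ + (B - σ * rderiv F (k+1) x₀) / c), le_trans hx₀ (le_max_left _ _), ?_⟩
    intro y hy
    have hy₀ : x₀ ≤ y := le_trans (le_max_left _ _) hy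
    have h := hmono self_mem_Ici (mem_Ici.2 hy₀) hy₀
    have hy₁ : x₀ + (B - σ * rderiv F (k+1) x₀) / c ≤ y := le_trans (le_max_right _ _) hy
    have h2 : B - σ * rderiv F (k+1) x₀ ≤ (y - x₀) * c := by
      rw [← div_le_iff₀ hc]; linarith
    have h3 : c * y - c * x₀ = (y - x₀) * c := by ring
    simp only at h
    linarith
  -- Step 2: propagate the growth down the derivative chain.
  have hdesc : ∀ j, j ≤ k →
      (∀ B : ℝ, ∃ x, a ≤ x ∧ ∀ y, x ≤ y → B ≤ σ * rderiv F (j+1) y) →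
      (∀ B : ℝ, ∃ x, a ≤ x ∧ ∀ y, x ≤ y → B ≤ σ * rderiv F j y) := by
    intro j hj hEj B
    obtain ⟨x, hax, hx⟩ := hEj 1
    have hgrow := grow x 1 (fun t => σ * rderiv F j t) (fun t => σ * rderiv F (j+1) t)
      ((rderiv_contOn a F (k+2) j (by omega) H1 H2 x hax).const_smul σ)
      (fun t ht => (H2 j (by omega) t (lt_of_le_of_lt hax ht)).const_mul σ)
      (fun t ht => hx t (le_of_lt ht))
    refine ⟨max x (x + (B - σ * rderiv F j x)), le_trans hax (le_max_left _ _), fun y hy => ?_⟩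
    have h1 := hgrow y (le_trans (le_max_left _ _) hy)
    have h2 : x + (B - σ * rderiv F j x) ≤ y := le_trans (le_max_right _ _) hy
    linarith
  have hall : ∀ i, i ≤ k + 1 → ∀ B : ℝ, ∃ x, a ≤ x ∧ ∀ y, x ≤ y → B ≤ σ * rderiv F (k+1-i) y := by
    intro i
    induction i with
    | zero => intro _; simpa using hEtop
    | succ n ih =>
      intro hn
      have h2 : (k + 1 - (n+1)) + 1 = k + 1 - n := by omega
      exact hdesc (k + 1 - (n+1)) (by omega) (by rw [h2]; exact ih (by omega))
  obtain ⟨x, hax, hx⟩ := (by simpa using hall (k+1) (le_refl _) : ∀ B : ℝ,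
    ∃ x, a ≤ x ∧ ∀ y, x ≤ y → B ≤ σ * rderiv F 0 y) 2
  have h2 : (2:ℝ) ≤ σ * F x := hx x (le_refl x)
  have hFle : F x ≤ 1 :=
    ge_of_tendsto hcdf.tendsto_atTop (eventually_atTop.2 ⟨x, fun y hy => hcdf.mono hy⟩)
  have hF0 : 0 ≤ F x :=
    le_of_tendsto hcdf.tendsto_atBot (eventually_atBot.2 ⟨x, fun y hy => hcdf.mono hy⟩)
  rcases hσ with rfl | rfl
  · linarith
  · linarith

private lemma clause4 (a : ℝ) (F : ℝ → ℝ) (k : ℕ) (hF : MemPD (k+2) a F) :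
    MonotoneOn (rderiv F (k+1)) (Ici a) ∨ AntitoneOn (rderiv F (k+1)) (Ici a) := by
  obtain ⟨hcdf, H1, H2, hmon⟩ := hF
  have hFmem : MemPD (k+2) a F := ⟨hcdf, H1, H2, hmon⟩
  have hfc : ContinuousOn (rderiv F k) (Ici a) :=
    rderiv_contOn a F (k+2) k (by omega) H1 H2 a (le_refl a)
  rcases hmon with hm | hm
  · -- top derivative is nondecreasing: it must be ≤ 0 everywhere
    by_cases hpos : ∃ x₀ ∈ Ici a, 0 < rderiv F (k+2) x₀
    · obtain ⟨x₀, hx₀, hc⟩ := hpos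
      exact (blowup a F k hFmem 1 (Or.inl rfl) x₀ hx₀ (rderiv F (k+2) x₀) hc
        (fun y hy => by
          have := hm hx₀ (mem_Ici.2 (le_trans hx₀ hy)) hy
          rw [one_mul]; exact this)).elim
    · push_neg at hpos
      right
      have hmono := mono_of_rderiv_nonneg a
        (fun t => -rderiv F k t) (fun t => -rderiv F (k+1) t) (fun t => -rderiv F (k+2) t)
        hfc.neg
        (fun t ht => (H2 k (by omega) t ht).neg)
        (fun t ht => (H1 k (by omega) t ht).neg)
        (fun t ht => (H1 (k+1) (by omega) t ht).neg)
        (fun t ht => neg_nonneg.2 (hpos t ht))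
      intro u hu v hv huv
      have := hmono hu hv huv
      simp only at this
      linarith
  · -- top derivative is nonincreasing: it must be ≥ 0 everywhere
    by_cases hneg : ∃ x₀ ∈ Ici a, rderiv F (k+2) x₀ < 0
    · obtain ⟨x₀, hx₀, hc⟩ := hneg
      exact (blowup a F k hFmem (-1) (Or.inr rfl) x₀ hx₀ (-(rderiv F (k+2) x₀)) (by linarith)
        (fun y hy => by
          have := hm hx₀ (mem_Ici.2 (le_trans hx₀ hy)) hy
          linarith)).elim
    · push_neg at hneg
      left
      exact mono_of_rderiv_nonneg a (rderiv F k) (rderiv F (k+1)) (rderiv F (k+2))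
        hfc
        (fun t ht => H2 k (by omega) t ht)
        (fun t ht => H1 k (by omega) t ht)
        (fun t ht => H1 (k+1) (by omega) t ht)
        hneg

private lemma memPD_pred (D : ℕ) (hD : 1 ≤ D) (a : ℝ) (F : ℝ → ℝ) (hF : MemPD D a F) :
    MemPD (D - 1) a F := by
  obtain ⟨m, rfl⟩ : ∃ m, D = m + 1 := ⟨D - 1, by omega⟩
  simp only [Nat.add_sub_cancel]
  refine ⟨hF.1, fun j hj => hF.2.1 j (by omega), fun j hj => hF.2.2.1 j (by omega), ?_⟩
  match m with
  | 0 => exact Or.inl (fun u _ v _ huv => hF.1.mono huv)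
  | Nat.succ k => exact clause4 a F k hF


/-- For `D ≥ 1`, `𝒫^D[a,∞) ⊆ 𝒫^{D-1}[a,∞)`, and consequently
`𝒫^D[a,∞) ⊆ 𝒫^k[a,∞)` for every `k ≤ D`. -/
theorem stmt_1 (D : ℕ) (hD : 1 ≤ D) (a : ℝ) (F : ℝ → ℝ) (hF : MemPD D a F) :
    MemPD (D - 1) a F ∧ ∀ k ≤ D, MemPD k a F := by
  have key : ∀ n, MemPD n a F → ∀ k ≤ n, MemPD k a F := by
    intro n
    induction n with
    | zero =>
      intro hG k hk
      rw [Nat.le_zero.mp hk]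
      exact hG
    | succ n ih =>
      intro hG k hk
      rcases Nat.lt_or_ge k (n+1) with h | h
      · have := memPD_pred (n+1) (by omega) a F hG
        simp only [Nat.add_sub_cancel] at this
        exact ih this k (by omega)
      · have : k = n + 1 := by omega
        subst this
        exact hG
  exact ⟨memPD_pred D hD a F hF, key D hF⟩
end

section
/- Let a ∈ ℝ and let D ≥ 1 be an integer. For every F ∈ 𝒫^D[a,∞) and every j ∈ {1,…,D}, the function x ↦ (−1)^{j+1} F_+^{(j)}(x) exists on [a,∞), is nonnegative, and is nonincreasing on [a,∞). -/
open MeasureTheory Filter Set Topology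

lemma mono_core_pos (u : ℝ) (G g k : ℝ → ℝ)
    (hG : ∀ t ∈ Set.Ioi u, HasDerivAt G (g t) t)
    (hg : ∀ t ∈ Set.Ioi u, HasDerivWithinAt g (k t) (Set.Ici t) t)
    (hk : ∀ t ∈ Set.Ioi u, 0 < k t) :
    ∀ x ∈ Set.Ioi u, ∀ y ∈ Set.Ioi u, x ≤ y → g x ≤ g y := by
  intro x hx y hy hxy
  rcases eq_or_lt_of_le hxy with rfl | hlt
  · exact le_refl _
  by_contra hgt
  push_neg at hgt
  set σ : ℝ := (g x + g y) / 2 with hσ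
  have hσx : σ < g x := by rw [hσ]; linarith
  have hσy : g y < σ := by rw [hσ]; linarith
  set ψ : ℝ → ℝ := fun t => G t - σ * t with hψdef
  have hsub : Set.Icc x y ⊆ Set.Ioi u := fun t ht => lt_of_lt_of_le hx ht.1
  have hψ : ∀ t ∈ Set.Ioi u, HasDerivAt ψ (g t - σ) t := by
    intro t ht
    exact ((hG t ht).sub (((hasDerivAt_id t).const_mul σ))).congr_deriv (by ring)
  have hcont : ContinuousOn ψ (Set.Icc x y) :=
    fun t ht => ((hψ t (hsub ht)).continuousAt).continuousWithinAt
  obtain ⟨m0, hm0, hmax0⟩ := isCompact_Icc.exists_isMaxOn (Set.nonempty_Icc.2 hxy) hcont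
  set A : Set ℝ := Set.Icc x y ∩ ψ ⁻¹' {ψ m0} with hA
  have hAclosed : IsClosed A :=
    hcont.preimage_isClosed_of_isClosed isClosed_Icc isClosed_singleton
  have hAcpt : IsCompact A := isCompact_Icc.of_isClosed_subset hAclosed Set.inter_subset_left
  have hAne : A.Nonempty := ⟨m0, hm0, rfl⟩
  have hmA : sSup A ∈ A := hAcpt.sSup_mem hAne
  set m : ℝ := sSup A with hm
  have hmIcc : m ∈ Set.Icc x y := hmA.1
  have hmval : ψ m = ψ m0 := hmA.2
  have hmmax : ∀ t ∈ Set.Icc x y, ψ t ≤ ψ m := fun t ht => (hmax0 ht).trans_eq hmval.symm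
  have hafter : ∀ t, m < t → t ≤ y → ψ t < ψ m := by
    intro t hmt hty
    have htIcc : t ∈ Set.Icc x y := ⟨hmIcc.1.trans hmt.le, hty⟩
    rcases lt_or_eq_of_le (hmmax t htIcc) with h | h
    · exact h
    · exact absurd (le_csSup hAcpt.bddAbove ⟨htIcc, h.trans hmval⟩) (not_le.2 hmt)
  -- m ≠ x
  have hxm : x < m := by
    have hdx := hasDerivAt_iff_tendsto_slope.1 (hψ x hx)
    have hle : 𝓝[>] x ≤ 𝓝[≠] x := nhdsWithin_mono _ (fun t ht => ne_of_gt ht)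
    have hev := (tendsto_order.1 (hdx.mono_left hle)).1 0 (by linarith)
    obtain ⟨t, hst, htIoc⟩ := (hev.and (Ioc_mem_nhdsGT_of_mem ⟨le_refl x, hlt⟩)).exists
    have h1 : 0 < ψ t - ψ x := by
      have h2 := mul_pos hst (sub_pos.2 htIoc.1)
      rwa [slope_def_field, div_mul_cancel₀ _ (sub_ne_zero_of_ne (ne_of_gt htIoc.1))] at h2
    have h3 : ψ t ≤ ψ m := hmmax t ⟨htIoc.1.le, htIoc.2⟩
    rcases eq_or_lt_of_le hmIcc.1 with h | h
    · exfalso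
      have := hmmax t ⟨htIoc.1.le, htIoc.2⟩
      rw [← h] at this; linarith
    · exact h
  -- m ≠ y
  have hmy : m < y := by
    have hdy := hasDerivAt_iff_tendsto_slope.1 (hψ y hy)
    have hle : 𝓝[<] y ≤ 𝓝[≠] y := nhdsWithin_mono _ (fun t ht => ne_of_lt ht)
    have hev := (tendsto_order.1 (hdy.mono_left hle)).2 0 (by linarith)
    obtain ⟨t, hst, htIoo⟩ := (hev.and (Ioo_mem_nhdsLT_of_mem ⟨hlt, le_refl y⟩)).exists
    have h1 : 0 < ψ t - ψ y := by
      have h2 := mul_pos_of_neg_of_neg hst (sub_neg.2 htIoo.2)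
      rwa [slope_def_field, div_mul_cancel₀ _ (sub_ne_zero_of_ne (ne_of_lt htIoo.2))] at h2
    have h3 : ψ t ≤ ψ m := hmmax t ⟨htIoo.1.le, htIoo.2.le⟩
    rcases lt_or_eq_of_le hmIcc.2 with h | h
    · exact h
    · exfalso; rw [h] at h3; linarith
  have hmIoi : m ∈ Set.Ioi u := lt_trans hx hxm
  -- derivative zero at m
  have hloc : IsLocalMax ψ m := by
    refine IsMaxOn.isLocalMax (fun t ht => hmmax t ht) (Icc_mem_nhds hxm hmy)
  have hder0 : g m - σ = 0 := hloc.hasDerivAt_eq_zero (hψ m hmIoi)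
  -- push right using the right derivative of g at m
  have hgm := hasDerivWithinAt_iff_tendsto_slope.1 (hg m hmIoi)
  rw [Set.Ici_sdiff_left] at hgm
  have hev2 := (tendsto_order.1 hgm).1 0 (hk m hmIoi)
  have hmem : {t : ℝ | σ < g t} ∈ 𝓝[>] m := by
    filter_upwards [hev2, self_mem_nhdsWithin] with t hst (htm : m < t)
    have h2 := mul_pos hst (sub_pos.2 htm)
    rw [slope_def_field, div_mul_cancel₀ _ (sub_ne_zero_of_ne (ne_of_gt htm))] at h2
    show σ < g t
    linarith
  obtain ⟨b, hb, hbsub⟩ := mem_nhdsGT_iff_exists_Ioc_subset.1 hmem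
  set b' : ℝ := min b ((m + y) / 2) with hb'
  have hmb' : m < b' := lt_min hb (by linarith)
  have hb'y : b' ≤ y := le_trans (min_le_right _ _) (by linarith)
  have hstrict : StrictMonoOn ψ (Set.Icc m b') := by
    refine strictMonoOn_of_deriv_pos (convex_Icc m b') ?_ ?_
    · intro t ht
      exact ((hψ t (lt_of_lt_of_le hmIoi (ht.1))).continuousAt).continuousWithinAt
    · intro t ht
      rw [interior_Icc] at ht
      have htIoi : t ∈ Set.Ioi u := lt_trans hmIoi ht.1
      rw [(hψ t htIoi).deriv]
      have h4 : t ∈ Set.Ioc m b := ⟨ht.1, le_trans ht.2.le (min_le_left _ _)⟩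
      have h5 : σ < g t := hbsub h4
      linarith
  have hlt2 : ψ m < ψ b' :=
    hstrict (Set.left_mem_Icc.2 hmb'.le) (Set.right_mem_Icc.2 hmb'.le) hmb'
  have : ψ b' ≤ ψ m := hmmax b' ⟨le_trans hmIcc.1 hmb'.le, hb'y⟩
  linarith

lemma mono_core (u : ℝ) (G g k : ℝ → ℝ)
    (hG : ∀ t ∈ Set.Ioi u, HasDerivAt G (g t) t)
    (hg : ∀ t ∈ Set.Ioi u, HasDerivWithinAt g (k t) (Set.Ici t) t)
    (hk : ∀ t ∈ Set.Ioi u, 0 ≤ k t) :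
    ∀ x ∈ Set.Ioi u, ∀ y ∈ Set.Ioi u, x ≤ y → g x ≤ g y := by
  have key : ∀ ε : ℝ, 0 < ε → ∀ x ∈ Set.Ioi u, ∀ y ∈ Set.Ioi u, x ≤ y →
      g x + ε * x ≤ g y + ε * y := by
    intro ε hε
    refine mono_core_pos u (fun t => G t + ε * (t ^ 2 / 2)) (fun t => g t + ε * t)
      (fun t => k t + ε) ?_ ?_ (fun t ht => by have := hk t ht; linarith)
    · intro t ht
      have h2 : HasDerivAt (fun s : ℝ => ε * (s ^ 2 / 2)) (ε * t) t := by
        have := ((hasDerivAt_pow 2 t).div_const 2).const_mul ε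
        refine this.congr_deriv ?_
        push_cast
        ring
      exact (hG t ht).add h2
    · intro t ht
      have h2 : HasDerivWithinAt (fun s : ℝ => ε * s) ε (Set.Ici t) t := by
        simpa using (hasDerivWithinAt_id t (Set.Ici t)).const_mul ε
      exact (hg t ht).add h2
  intro x hx y hy hxy
  rcases eq_or_lt_of_le hxy with rfl | hlt
  · exact le_refl _
  refine le_of_forall_pos_le_add ?_
  intro ε' hε'
  have hw : (0:ℝ) < y - x := sub_pos.2 hlt
  have h := key (ε' / (y - x)) (div_pos hε' hw) x hx y hy hxy
  have h2 : ε' / (y - x) * (y - x) = ε' := div_mul_cancel₀ _ (ne_of_gt hw)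
  nlinarith [h]

lemma mono_on_Ici (a : ℝ) (G g k : ℝ → ℝ)
    (hG : ∀ t ∈ Set.Ioi a, HasDerivAt G (g t) t)
    (hg : ∀ t ∈ Set.Ici a, HasDerivWithinAt g (k t) (Set.Ici t) t)
    (hk : ∀ t ∈ Set.Ici a, 0 ≤ k t) :
    MonotoneOn g (Set.Ici a) := by
  have hcore := mono_core a G g k hG (fun t ht => hg t (Set.mem_Ici.2 (le_of_lt ht)))
    (fun t ht => hk t (Set.mem_Ici.2 (le_of_lt ht)))
  intro x hx y hy hxy
  rcases eq_or_lt_of_le (Set.mem_Ici.1 hx : a ≤ x) with rfl | hax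
  · rcases eq_or_lt_of_le hxy with rfl | hay
    · exact le_refl _
    · have hc : ContinuousWithinAt g (Set.Ici a) a := (hg a Set.self_mem_Ici).continuousWithinAt
      have hc2 : Tendsto g (𝓝[>] a) (𝓝 (g a)) :=
        hc.mono_left (nhdsWithin_mono _ Set.Ioi_subset_Ici_self)
      refine le_of_tendsto hc2 ?_
      filter_upwards [Ioc_mem_nhdsGT_of_mem ⟨le_refl a, hay⟩] with t ht
      exact hcore t ht.1 y hay ht.2
  · exact hcore x hax y (Set.mem_Ioi.2 (lt_of_lt_of_le hax hxy)) hxy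

lemma grow_s2 (u : ℝ) (G g k : ℝ → ℝ) (c : ℝ)
    (hG : ∀ t ∈ Set.Ioi u, HasDerivAt G (g t) t)
    (hg : ∀ t ∈ Set.Ioi u, HasDerivWithinAt g (k t) (Set.Ici t) t)
    (hk : ∀ t ∈ Set.Ioi u, c ≤ k t) :
    ∀ x ∈ Set.Ioi u, ∀ y ∈ Set.Ioi u, x ≤ y → g x + c * (y - x) ≤ g y := by
  intro x hx y hy hxy
  have h := mono_core u (fun t => G t - c * (t ^ 2 / 2)) (fun t => g t - c * t)
    (fun t => k t - c) ?_ ?_ (fun t ht => by have := hk t ht; linarith) x hx y hy hxy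
  · linarith
  · intro t ht
    have h2 : HasDerivAt (fun s : ℝ => c * (s ^ 2 / 2)) (c * t) t := by
      have := ((hasDerivAt_pow 2 t).div_const 2).const_mul c
      refine this.congr_deriv ?_
      push_cast
      ring
    exact (hG t ht).sub h2
  · intro t ht
    have h2 : HasDerivWithinAt (fun s : ℝ => c * s) c (Set.Ici t) t := by
      simpa using (hasDerivWithinAt_id t (Set.Ici t)).const_mul c
    exact (hg t ht).sub h2

lemma grow_of_monotone (g k : ℝ → ℝ) (hmono : Monotone g) (x0 : ℝ)
    (hg : ∀ t, x0 ≤ t → HasDerivWithinAt g (k t) (Set.Ici t) t)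
    (c : ℝ) (hc : 0 < c) (hk : ∀ t, x0 ≤ t → c ≤ k t) :
    ∀ y, x0 ≤ y → g x0 + c / 2 * (y - x0) ≤ g y := by
  intro y hy
  set S : Set ℝ := {t | t ∈ Set.Icc x0 y ∧ g x0 + c / 2 * (t - x0) ≤ g t} with hS
  have hS0 : x0 ∈ S := ⟨⟨le_refl _, hy⟩, by simp⟩
  have hSne : S.Nonempty := ⟨x0, hS0⟩
  have hSbdd : BddAbove S := BddAbove.mono (fun t ht => ht.1) bddAbove_Icc
  set s : ℝ := sSup S with hs
  have hs0 : x0 ≤ s := le_csSup hSbdd hS0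
  have hsy : s ≤ y := csSup_le hSne (fun t ht => ht.1.2)
  have hsS : g x0 + c / 2 * (s - x0) ≤ g s := by
    by_contra hlt
    push_neg at hlt
    set ε : ℝ := (g x0 + c / 2 * (s - x0) - g s) / (c / 2) with hε
    have hεpos : 0 < ε := div_pos (by linarith) (by linarith)
    obtain ⟨t, htS, hts⟩ := exists_lt_of_lt_csSup hSne (show s - ε < s by linarith)
    have hts' : t ≤ s := le_csSup hSbdd htS
    have h1 : g t ≤ g s := hmono hts'
    have h2 : g x0 + c / 2 * (t - x0) ≤ g t := htS.2
    have h3 : c / 2 * ε = g x0 + c / 2 * (s - x0) - g s := by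
      rw [hε]; field_simp
    nlinarith
  have hsy' : s = y := by
    by_contra hne
    have hsy2 : s < y := lt_of_le_of_ne hsy hne
    have hgs := hasDerivWithinAt_iff_tendsto_slope.1 (hg s hs0)
    rw [Set.Ici_sdiff_left] at hgs
    have hev := (tendsto_order.1 hgs).1 (c / 2) (by linarith [hk s hs0])
    obtain ⟨t, hst, htIoc⟩ := (hev.and (Ioc_mem_nhdsGT_of_mem ⟨le_refl s, hsy2⟩)).exists
    have h1 : c / 2 * (t - s) ≤ g t - g s := by
      have h2 := mul_le_mul_of_nonneg_right hst.le (sub_pos.2 htIoc.1).le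
      rwa [slope_def_field, div_mul_cancel₀ _ (sub_ne_zero_of_ne (ne_of_gt htIoc.1))] at h2
    have htS : t ∈ S := ⟨⟨hs0.trans htIoc.1.le, htIoc.2⟩, by nlinarith⟩
    exact absurd (le_csSup hSbdd htS) (not_le.2 htIoc.1)
  rw [← hsy']
  exact hsS

lemma rd_nonneg_of_mono_right {g : ℝ → ℝ} {k x : ℝ}
    (hg : HasDerivWithinAt g k (Set.Ici x) x)
    (hm : ∀ y, x ≤ y → g x ≤ g y) : 0 ≤ k := by
  have h := hasDerivWithinAt_iff_tendsto_slope.1 hg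
  rw [Set.Ici_sdiff_left] at h
  refine ge_of_tendsto h ?_
  filter_upwards [self_mem_nhdsWithin] with y (hy : x < y)
  rw [slope_def_field]
  exact div_nonneg (sub_nonneg.2 (hm y hy.le)) (sub_nonneg.2 hy.le)

lemma rd_nonpos_of_anti_right {g : ℝ → ℝ} {k x : ℝ}
    (hg : HasDerivWithinAt g k (Set.Ici x) x)
    (hm : ∀ y, x ≤ y → g y ≤ g x) : k ≤ 0 := by
  have h := rd_nonneg_of_mono_right hg.neg (fun y hy => neg_le_neg (hm y hy))
  linarith

/-- For `D ≥ 1`, `F ∈ 𝒫^D[a,∞)` and `1 ≤ j ≤ D`, the function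
`x ↦ (-1)^(j+1) F₊^(j)(x)` exists on `[a,∞)` (as the right derivative of the `(j-1)`-th
derivative), is nonnegative there, and is nonincreasing on `[a,∞)`. -/
theorem stmt_2 (D : ℕ) (hD : 1 ≤ D) (a : ℝ) (F : ℝ → ℝ) (hF : MemPD D a F)
    (j : ℕ) (hj1 : 1 ≤ j) (hjD : j ≤ D) :
    (∀ x ∈ Set.Ici a, HasDerivWithinAt (rderiv F (j - 1)) (rderiv F j x) (Set.Ici x) x) ∧
    (∀ x ∈ Set.Ici a, 0 ≤ (-1 : ℝ) ^ (j + 1) * rderiv F j x) ∧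
    AntitoneOn (fun x => (-1 : ℝ) ^ (j + 1) * rderiv F j x) (Set.Ici a) := by
  obtain ⟨hcdf, hd1, hd2, hmono⟩ := hF
  have hF0 : ∀ x, 0 ≤ F x := fun x =>
    le_of_tendsto hcdf.tendsto_atBot (eventually_atBot.2 ⟨x, fun y hy => hcdf.mono hy⟩)
  have hF1 : ∀ x, F x ≤ 1 := fun x =>
    ge_of_tendsto hcdf.tendsto_atTop (eventually_atTop.2 ⟨x, fun y hy => hcdf.mono hy⟩)
  -- no positive/negative tails
  have hNT : ∀ k, 1 ≤ k → k ≤ D →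
      (∀ x0, a ≤ x0 → ∀ c, 0 < c → ¬(∀ x, x0 ≤ x → c ≤ rderiv F k x)) ∧
      (∀ x0, a ≤ x0 → ∀ c, 0 < c → ¬(∀ x, x0 ≤ x → rderiv F k x ≤ -c)) := by
    intro k hk1
    induction k, hk1 using Nat.le_induction with
    | base =>
      intro _hkD
      constructor
      · intro x0 hx0 c hc h
        have hgrow := grow_of_monotone F (rderiv F 1) hcdf.mono x0
          (fun t ht => hd1 0 hD t (le_trans hx0 ht)) c hc h
        have h4c : (0:ℝ) < 4 / c := by positivity
        have hy4 : x0 ≤ x0 + 4 / c := by linarith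
        have heq : c / 2 * (x0 + 4 / c - x0) = 2 := by
          field_simp
          ring
        have := hgrow (x0 + 4 / c) hy4
        linarith [hF0 x0, hF1 (x0 + 4 / c)]
      · intro x0 hx0 c hc h
        have h0 := rd_nonneg_of_mono_right (hd1 0 hD x0 hx0) (fun y hy => hcdf.mono hy)
        linarith [h x0 le_rfl]
    | succ k hk1 ih =>
      intro hkD1
      obtain ⟨k', rfl⟩ : ∃ k', k = k' + 1 := ⟨k - 1, by omega⟩
      have ihp := ih (by omega)
      constructor
      · intro x0 hx0 c hc h
        have hgrow := grow_s2 x0 (rderiv F k') (rderiv F (k' + 1)) (rderiv F (k' + 2)) c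
          (fun t ht => hd2 k' (by omega) t (lt_of_le_of_lt hx0 ht))
          (fun t ht => hd1 (k' + 1) (by omega) t (le_of_lt (lt_of_le_of_lt hx0 ht)))
          (fun t ht => h t (le_of_lt ht))
        set B := rderiv F (k' + 1) (x0 + 1) with hB
        have habs : (0:ℝ) ≤ |B| := abs_nonneg B
        have hd2c : (0:ℝ) < (2 + |B|) / c := by positivity
        apply ihp.1 (x0 + 1 + (2 + |B|) / c) (by linarith) 1 one_pos
        intro x hx
        have hx1 : x0 < x0 + 1 := by linarith
        have hxx : x0 < x := by linarith
        have h1 := hgrow (x0 + 1) hx1 x hxx (by linarith)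
        have h2 : c * ((2 + |B|) / c) = 2 + |B| := by field_simp
        have h3 : c * ((2 + |B|) / c) ≤ c * (x - (x0 + 1)) :=
          mul_le_mul_of_nonneg_left (by linarith) hc.le
        rw [h2] at h3
        linarith [neg_abs_le B]
      · intro x0 hx0 c hc h
        have hgrow := grow_s2 x0 (fun t => -(rderiv F k' t)) (fun t => -(rderiv F (k' + 1) t))
          (fun t => -(rderiv F (k' + 2) t)) c
          (fun t ht => (hd2 k' (by omega) t (lt_of_le_of_lt hx0 ht)).neg)
          (fun t ht => (hd1 (k' + 1) (by omega) t (le_of_lt (lt_of_le_of_lt hx0 ht))).neg)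
          (fun t ht => by have := h t (le_of_lt ht); linarith)
        set B := -(rderiv F (k' + 1) (x0 + 1)) with hB
        have habs : (0:ℝ) ≤ |B| := abs_nonneg B
        have hd2c : (0:ℝ) < (2 + |B|) / c := by positivity
        apply ihp.2 (x0 + 1 + (2 + |B|) / c) (by linarith) 1 one_pos
        intro x hx
        have hx1 : x0 < x0 + 1 := by linarith
        have hxx : x0 < x := by linarith
        have h1 := hgrow (x0 + 1) hx1 x hxx (by linarith)
        have h2 : c * ((2 + |B|) / c) = 2 + |B| := by field_simp
        have h3 : c * ((2 + |B|) / c) ≤ c * (x - (x0 + 1)) :=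
          mul_le_mul_of_nonneg_left (by linarith) hc.le
        rw [h2] at h3
        linarith [neg_abs_le B, habs, hB]
  -- sign from monotonicity direction
  have hsm : ∀ k, 1 ≤ k → k ≤ D → MonotoneOn (rderiv F k) (Set.Ici a) →
      ∀ x, a ≤ x → rderiv F k x ≤ 0 := by
    intro k hk1 hkD hmon x hx
    by_contra hpos
    push_neg at hpos
    exact (hNT k hk1 hkD).1 x hx _ hpos (fun y hy => hmon hx (le_trans hx hy) hy)
  have hsa : ∀ k, 1 ≤ k → k ≤ D → AntitoneOn (rderiv F k) (Set.Ici a) →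
      ∀ x, a ≤ x → 0 ≤ rderiv F k x := by
    intro k hk1 hkD hanti x hx
    by_contra hneg
    push_neg at hneg
    refine (hNT k hk1 hkD).2 x hx (-(rderiv F k x)) (by linarith) ?_
    intro y hy
    have := hanti hx (le_trans hx hy) hy
    linarith
  -- each level is monotone
  have hM : ∀ i k, 1 ≤ k → k ≤ D → D ≤ k + i →
      MonotoneOn (rderiv F k) (Set.Ici a) ∨ AntitoneOn (rderiv F k) (Set.Ici a) := by
    intro i
    induction i with
    | zero =>
      intro k hk1 hkD hDk
      have hkd : k = D := by omega
      rw [hkd]; exact hmono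
    | succ i ih =>
      intro k hk1 hkD hDk
      by_cases hkD' : k = D
      · rw [hkD']; exact hmono
      · have hnext := ih (k + 1) (by omega) (by omega) (by omega)
        obtain ⟨k', rfl⟩ : ∃ k', k = k' + 1 := ⟨k - 1, by omega⟩
        rcases hnext with hmon | hanti
        · have hsign := hsm (k' + 2) (by omega) (by omega) hmon
          right
          have hmono2 : MonotoneOn (fun x => -(rderiv F (k' + 1) x)) (Set.Ici a) := by
            refine mono_on_Ici a (fun t => -(rderiv F k' t)) _
              (fun t => -(rderiv F (k' + 2) t)) ?_ ?_ ?_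
            · exact fun t ht => (hd2 k' (by omega) t ht).neg
            · exact fun t ht => (hd1 (k' + 1) (by omega) t ht).neg
            · intro t ht
              have := hsign t ht
              linarith
          intro x hx y hy hxy
          have h := hmono2 hx hy hxy
          dsimp only at h
          linarith
        · have hsign := hsa (k' + 2) (by omega) (by omega) hanti
          left
          exact mono_on_Ici a (rderiv F k') _ (rderiv F (k' + 2))
            (fun t ht => hd2 k' (by omega) t ht)
            (fun t ht => hd1 (k' + 1) (by omega) t ht)
            (fun t ht => hsign t ht)
  have hMono : ∀ k, 1 ≤ k → k ≤ D →
      MonotoneOn (rderiv F k) (Set.Ici a) ∨ AntitoneOn (rderiv F k) (Set.Ici a) :=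
    fun k h1 h2 => hM D k h1 h2 (by omega)
  -- the alternating sign and antitonicity statement
  have hQ : ∀ k, 1 ≤ k → k ≤ D →
      (∀ x, a ≤ x → 0 ≤ (-1 : ℝ) ^ (k + 1) * rderiv F k x) ∧
      AntitoneOn (fun x => (-1 : ℝ) ^ (k + 1) * rderiv F k x) (Set.Ici a) := by
    intro k hk1
    induction k, hk1 using Nat.le_induction with
    | base =>
      intro _hkD
      have hpos : ∀ x, a ≤ x → 0 ≤ rderiv F 1 x := fun x hx =>
        rd_nonneg_of_mono_right (hd1 0 hD x hx) (fun y hy => hcdf.mono hy)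
      have hone : ((-1 : ℝ)) ^ (1 + 1) = 1 := by norm_num
      constructor
      · intro x hx
        rw [hone, one_mul]
        exact hpos x hx
      · intro x hx y hy hxy
        simp only [hone, one_mul]
        rcases hMono 1 le_rfl hD with hmon | hanti
        · have hneg := hsm 1 le_rfl hD hmon
          linarith [hpos x hx, hpos y (le_trans hx hxy), hneg x hx, hneg y (le_trans hx hxy)]
        · exact hanti hx hy hxy
    | succ k hk1 ih =>
      intro hkD1
      obtain ⟨ihn, iha⟩ := ih (by omega)
      have hs : ((-1 : ℝ)) ^ (k + 1 + 1) = -((-1 : ℝ)) ^ (k + 1) := by ring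
      have hnn : ∀ x, a ≤ x → 0 ≤ (-1 : ℝ) ^ (k + 1 + 1) * rderiv F (k + 1) x := by
        intro x hx
        have hder : HasDerivWithinAt (fun t => (-1 : ℝ) ^ (k + 1) * rderiv F k t)
            ((-1 : ℝ) ^ (k + 1) * rderiv F (k + 1) x) (Set.Ici x) x :=
          (hd1 k (by omega) x hx).const_mul _
        have hle := rd_nonpos_of_anti_right hder
          (fun y hy => iha hx (le_trans hx hy) hy)
        rw [hs]
        linarith
      refine ⟨hnn, ?_⟩
      have hsone : ((-1 : ℝ)) ^ (k + 1 + 1) = 1 ∨ ((-1 : ℝ)) ^ (k + 1 + 1) = -1 := by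
        rcases Nat.even_or_odd (k + 1 + 1) with he | ho
        · exact Or.inl he.neg_one_pow
        · exact Or.inr ho.neg_one_pow
      intro x hx y hy hxy
      have h1 := hnn x hx
      have h2 := hnn y hy
      dsimp only
      rcases hMono (k + 1) (by omega) hkD1 with hm | hm
      · have hsg := hsm (k + 1) (by omega) hkD1 hm
        rcases hsone with hs1 | hs1 <;> rw [hs1] at h1 h2 ⊢
        · linarith [hsg x hx, hsg y hy]
        · have := hm hx hy hxy
          linarith
      · have hsg := hsa (k + 1) (by omega) hkD1 hm
        rcases hsone with hs1 | hs1 <;> rw [hs1] at h1 h2 ⊢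
        · have := hm hx hy hxy
          linarith
        · linarith [hsg x hx, hsg y hy]
  refine ⟨?_, ?_, (hQ j hj1 hjD).2⟩
  · intro x hx
    have h := hd1 (j - 1) (by omega) x hx
    have he : j - 1 + 1 = j := by omega
    rwa [he] at h
  · intro x hx
    exact (hQ j hj1 hjD).1 x hx
end

section
/- Let a < b̲ < b̄ be real numbers and 0 ≤ γ̲ ≤ γ̄ ≤ 1. Consider the supremum of μ([b̲, b̄]) over all Borel probability measures μ on ℝ such that the restriction of μ to (a,∞) has a density f with respect to Lebesgue measure which is nonnegative and nonincreasing on [a,∞), and such that γ̲ ≤ μ((a,∞)) ≤ γ̄. This supremum equals γ̄·(b̄ − b̲)/(b̄ − a), and it is attained by the measure placing mass γ̄ uniformly on [a, b̄] and mass 1 − γ̄ at any point below a. -/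
open MeasureTheory Filter Set Topology

/-- Feasibility for the monotone tail estimation problem: `μ` is a Borel probability measure
on `ℝ` whose restriction to `(a,∞)` has a density `f` with respect to Lebesgue measure that is
nonnegative and nonincreasing on `[a,∞)`, and whose tail mass `μ((a,∞))` lies in `[γl, γu]`. -/
def Feas4 (a γl γu : ℝ) (μ : Measure ℝ) : Prop :=
  IsProbabilityMeasure μ ∧
  (∃ f : ℝ → ℝ, (∀ x ∈ Set.Ici a, 0 ≤ f x) ∧ AntitoneOn f (Set.Ici a) ∧
    μ.restrict (Set.Ioi a) =
      (volume.restrict (Set.Ioi a)).withDensity (fun x => ENNReal.ofReal (f x))) ∧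
  γl ≤ (μ (Set.Ioi a)).toReal ∧ (μ (Set.Ioi a)).toReal ≤ γu

/-- The candidate optimal measure: mass `γu` spread uniformly over `[a, bu]`, plus
mass `1 - γu` at the point `c`. -/
noncomputable def OptMeas4 (a bu γu c : ℝ) : Measure ℝ :=
  ENNReal.ofReal (γu / (bu - a)) • volume.restrict (Set.Icc a bu)
    + ENNReal.ofReal (1 - γu) • Measure.dirac c

/-- Upper bound: any feasible measure has `μ([bl,bu]) ≤ γu (bu - bl)/(bu - a)`. -/
lemma stmt4_ub (a bl bu γl γu : ℝ) (h1 : a < bl) (h2 : bl < bu)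
    (μ : Measure ℝ) (hμ : Feas4 a γl γu μ) :
    (μ (Set.Icc bl bu)).toReal ≤ γu * (bu - bl) / (bu - a) := by
  obtain ⟨hprob, ⟨f, hf0, hfa, hfd⟩, hγl, hγu⟩ := hμ
  haveI := hprob
  set g : ℝ → ℝ := fun x => f (max a x) with hgdef
  have hganti : Antitone g := fun x y hxy =>
    hfa (le_max_left a x) (le_max_left a y) (max_le_max le_rfl hxy)
  have hgm : Measurable fun x => ENNReal.ofReal (g x) :=
    hganti.measurable.ennreal_ofReal
  have hgf : ∀ x ∈ Set.Ici a, g x = f x := fun x hx => by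
    simp [hgdef, max_eq_right (show a ≤ x from hx)]
  -- express μ of subsets of (a,∞) as lintegrals of g
  have key : ∀ s : Set ℝ, MeasurableSet s → s ⊆ Set.Ioi a →
      μ s = ∫⁻ x in s, ENNReal.ofReal (g x) := by
    intro s hs hsub
    have : μ s = μ.restrict (Set.Ioi a) s := by
      rw [Measure.restrict_apply hs, Set.inter_eq_left.2 hsub]
    rw [this, hfd, withDensity_apply _ hs,
      Measure.restrict_restrict hs, Set.inter_eq_left.2 hsub]
    refine setLIntegral_congr_fun hs (fun x hx => ?_)
    exact congrArg ENNReal.ofReal (hgf x (show a ≤ x from le_of_lt (hsub hx))).symm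
  have hIcc : Set.Icc bl bu ⊆ Set.Ioi a := fun x hx => lt_of_lt_of_le h1 hx.1
  have hIoo : Set.Ioo a bl ⊆ Set.Ioi a := fun x hx => hx.1
  set A := μ (Set.Icc bl bu) with hA
  set B := μ (Set.Ioo a bl) with hB
  have hAle : A ≤ ENNReal.ofReal (g bl * (bu - bl)) := by
    rw [hA, key _ measurableSet_Icc hIcc]
    calc ∫⁻ x in Set.Icc bl bu, ENNReal.ofReal (g x)
        ≤ ∫⁻ _x in Set.Icc bl bu, ENNReal.ofReal (g bl) :=
          setLIntegral_mono measurable_const fun x hx =>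
            ENNReal.ofReal_le_ofReal (hganti hx.1)
      _ = ENNReal.ofReal (g bl) * volume (Set.Icc bl bu) := by
          rw [setLIntegral_const]
      _ = ENNReal.ofReal (g bl * (bu - bl)) := by
          rw [Real.volume_Icc, ← ENNReal.ofReal_mul]
          have : (a:ℝ) ≤ bl := h1.le
          have := hf0 bl this
          rw [← hgf bl h1.le] at this
          exact this
  have hBge : ENNReal.ofReal (g bl * (bl - a)) ≤ B := by
    rw [hB, key _ measurableSet_Ioo hIoo]
    calc ENNReal.ofReal (g bl * (bl - a))
        = ENNReal.ofReal (g bl) * volume (Set.Ioo a bl) := by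
          rw [Real.volume_Ioo, ← ENNReal.ofReal_mul]
          have := hf0 bl h1.le
          rw [← hgf bl h1.le] at this
          exact this
      _ = ∫⁻ _x in Set.Ioo a bl, ENNReal.ofReal (g bl) := by rw [setLIntegral_const]
      _ ≤ ∫⁻ x in Set.Ioo a bl, ENNReal.ofReal (g x) :=
          setLIntegral_mono hgm fun x hx => ENNReal.ofReal_le_ofReal (hganti hx.2.le)
  have hsum : A + B ≤ ENNReal.ofReal γu := by
    have hdisj : Disjoint (Set.Icc bl bu) (Set.Ioo a bl) := by
      rw [Set.disjoint_left]
      rintro x ⟨hx1, _⟩ ⟨_, hx2⟩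
      exact absurd hx1 (not_le.2 hx2)
    have : A + B = μ (Set.Icc bl bu ∪ Set.Ioo a bl) :=
      (measure_union hdisj measurableSet_Ioo).symm
    rw [this]
    calc μ (Set.Icc bl bu ∪ Set.Ioo a bl) ≤ μ (Set.Ioi a) :=
          measure_mono (Set.union_subset hIcc hIoo)
      _ = ENNReal.ofReal ((μ (Set.Ioi a)).toReal) :=
          (ENNReal.ofReal_toReal (measure_ne_top μ _)).symm
      _ ≤ ENNReal.ofReal γu := ENNReal.ofReal_le_ofReal hγu
  -- pass to reals
  have hAfin : A ≠ ⊤ := measure_ne_top μ _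
  have hBfin : B ≠ ⊤ := measure_ne_top μ _
  set α := A.toReal with hα
  set β := B.toReal with hβ
  have hF0 : 0 ≤ g bl := by rw [hgf bl h1.le]; exact hf0 bl h1.le
  have r1 : α ≤ g bl * (bu - bl) := by
    have := ENNReal.toReal_mono ENNReal.ofReal_ne_top hAle
    rwa [ENNReal.toReal_ofReal (mul_nonneg hF0 (by linarith))] at this
  have r2 : g bl * (bl - a) ≤ β :=
    (ENNReal.ofReal_le_iff_le_toReal hBfin).1 hBge
  have r3 : α + β ≤ γu := by
    have hγu0 : 0 ≤ γu := le_trans ENNReal.toReal_nonneg hγu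
    have := ENNReal.toReal_mono ENNReal.ofReal_ne_top hsum
    rwa [ENNReal.toReal_ofReal hγu0, ENNReal.toReal_add hAfin hBfin] at this
  have hα0 : 0 ≤ α := ENNReal.toReal_nonneg
  have hβ0 : 0 ≤ β := ENNReal.toReal_nonneg
  rw [le_div_iff₀ (by linarith : (0:ℝ) < bu - a)]
  nlinarith [mul_le_mul_of_nonneg_right r1 (by linarith : (0:ℝ) ≤ bl - a),
    mul_le_mul_of_nonneg_right r2 (by linarith : (0:ℝ) ≤ bu - bl),
    mul_le_mul_of_nonneg_right r3 (by linarith : (0:ℝ) ≤ bu - bl)]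

/-- Feasibility and value of the candidate optimal measure. -/
lemma stmt4_opt (a bl bu γl γu : ℝ) (h1 : a < bl) (h2 : bl < bu)
    (h3 : 0 ≤ γl) (h4 : γl ≤ γu) (h5 : γu ≤ 1) (c : ℝ) (hc : c < a) :
    Feas4 a γl γu (OptMeas4 a bu γu c) ∧
    ((OptMeas4 a bu γu c) (Set.Icc bl bu)).toReal = γu * (bu - bl) / (bu - a) := by
  have hγ0 : 0 ≤ γu := le_trans h3 h4
  have hab : a < bu := h1.trans h2
  have hba : (0:ℝ) < bu - a := by linarith
  have hdiv : 0 ≤ γu / (bu - a) := div_nonneg hγ0 hba.le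
  have happ : ∀ s : Set ℝ, MeasurableSet s → (OptMeas4 a bu γu c) s =
      ENNReal.ofReal (γu / (bu - a)) * volume (s ∩ Set.Icc a bu)
        + ENNReal.ofReal (1 - γu) * s.indicator 1 c := by
    intro s hs
    simp [OptMeas4, Measure.add_apply, Measure.smul_apply, Measure.restrict_apply hs,
      Measure.dirac_apply' _ hs, smul_eq_mul]
  have huniv : (OptMeas4 a bu γu c) Set.univ = 1 := by
    rw [happ _ MeasurableSet.univ]
    simp only [Set.univ_inter, Set.indicator_univ, Pi.one_apply, mul_one]
    rw [Real.volume_Icc, ← ENNReal.ofReal_mul hdiv, div_mul_cancel₀ _ hba.ne',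
      ← ENNReal.ofReal_add hγ0 (by linarith)]
    norm_num
  have hIoi : (OptMeas4 a bu γu c) (Set.Ioi a) = ENNReal.ofReal γu := by
    rw [happ _ measurableSet_Ioi]
    have h0 : Set.Ioi a ∩ Set.Icc a bu = Set.Ioc a bu := by
      ext x; simp only [Set.mem_inter_iff, Set.mem_Ioi, Set.mem_Icc, Set.mem_Ioc]
      constructor
      · rintro ⟨h, _, h'⟩; exact ⟨h, h'⟩
      · rintro ⟨h, h'⟩; exact ⟨h, h.le, h'⟩
    rw [h0, Set.indicator_of_notMem (by simpa using hc.le), mul_zero, add_zero,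
      Real.volume_Ioc, ← ENNReal.ofReal_mul hdiv, div_mul_cancel₀ _ hba.ne']
  have hval : ((OptMeas4 a bu γu c) (Set.Icc bl bu)).toReal = γu * (bu - bl) / (bu - a) := by
    rw [happ _ measurableSet_Icc]
    have h0 : Set.Icc bl bu ∩ Set.Icc a bu = Set.Icc bl bu :=
      Set.inter_eq_left.2 (Set.Icc_subset_Icc h1.le le_rfl)
    rw [h0, Set.indicator_of_notMem (by simp; intro h; linarith), mul_zero, add_zero,
      Real.volume_Icc, ← ENNReal.ofReal_mul hdiv,
      ENNReal.toReal_ofReal (mul_nonneg hdiv (by linarith))]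
    ring
  have hdens : (OptMeas4 a bu γu c).restrict (Set.Ioi a) =
      (volume.restrict (Set.Ioi a)).withDensity
        (fun x => ENNReal.ofReal (if x ≤ bu then γu / (bu - a) else 0)) := by
    have hd : (Measure.dirac c).restrict (Set.Ioi a) = 0 := by
      rw [Measure.restrict_eq_zero, Measure.dirac_apply' _ measurableSet_Ioi]
      simp [hc, not_lt.2 hc.le]
    have h0 : Set.Ioi a ∩ Set.Icc a bu = Set.Iic bu ∩ Set.Ioi a := by
      ext x
      simp only [Set.mem_inter_iff, Set.mem_Ioi, Set.mem_Icc, Set.mem_Iic]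
      constructor
      · rintro ⟨h, _, h'⟩; exact ⟨h', h⟩
      · rintro ⟨h, h'⟩; exact ⟨h', h'.le, h⟩
    have hfun : (fun x => ENNReal.ofReal (if x ≤ bu then γu / (bu - a) else 0)) =
        (Set.Iic bu).indicator (fun _ => ENNReal.ofReal (γu / (bu - a))) := by
      funext x
      by_cases h : x ≤ bu <;> simp [h, Set.indicator, Set.mem_Iic]
    rw [hfun, withDensity_indicator measurableSet_Iic,
      Measure.restrict_restrict measurableSet_Iic,
      withDensity_const, OptMeas4, Measure.restrict_add, Measure.restrict_smul,
      Measure.restrict_smul, hd, smul_zero, add_zero,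
      Measure.restrict_restrict measurableSet_Ioi, h0]
  have htoReal : ((OptMeas4 a bu γu c) (Set.Ioi a)).toReal = γu := by
    rw [hIoi, ENNReal.toReal_ofReal hγ0]
  refine ⟨⟨⟨huniv⟩, ⟨fun x => if x ≤ bu then γu / (bu - a) else 0, ?_, ?_, hdens⟩,
      by rw [htoReal]; exact h4, by rw [htoReal]⟩, hval⟩
  · intro x _
    by_cases h : x ≤ bu <;> simp [h, hdiv]
  · intro x _ y _ hxy
    by_cases hy : y ≤ bu
    · have hx : x ≤ bu := hxy.trans hy
      simp [hx, hy]
    · by_cases hx : x ≤ bu <;> simp [hx, hy, hdiv]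

/-- Monotone tail estimation: the supremum of `μ([bl, bu])` over all feasible
measures equals `γu (bu - bl)/(bu - a)`, and it is attained by the measure placing mass `γu`
uniformly on `[a, bu]` and mass `1 - γu` at any point `c < a`. -/
theorem stmt_4 (a bl bu γl γu : ℝ) (h1 : a < bl) (h2 : bl < bu)
    (h3 : 0 ≤ γl) (h4 : γl ≤ γu) (h5 : γu ≤ 1) :
    IsGreatest { r : ℝ | ∃ μ : Measure ℝ, Feas4 a γl γu μ ∧ r = (μ (Set.Icc bl bu)).toReal }
      (γu * (bu - bl) / (bu - a)) ∧
    ∀ c : ℝ, c < a →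
      Feas4 a γl γu (OptMeas4 a bu γu c) ∧
      ((OptMeas4 a bu γu c) (Set.Icc bl bu)).toReal = γu * (bu - bl) / (bu - a) := by
  refine ⟨⟨?_, ?_⟩, fun c hc => stmt4_opt a bl bu γl γu h1 h2 h3 h4 h5 c hc⟩
  · obtain ⟨hfeas, hval⟩ := stmt4_opt a bl bu γl γu h1 h2 h3 h4 h5 (a - 1) (by linarith)
    exact ⟨OptMeas4 a bu γu (a - 1), hfeas, hval.symm⟩
  · rintro r ⟨μ, hμ, rfl⟩
    exact stmt4_ub a bl bu γl γu h1 h2 μ hμ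
end

section
/- Let 𝒥 be a finite index set, H, G_j : [0,∞) → ℝ measurable, γ_j ∈ ℝ, and let Z* be the optimal value of the moment program sup{ ∫ H dP : ∫ G_j dP ≤ γ_j for all j ∈ 𝒥, P ∈ 𝒬(ℝ⁺) }. Fix x ∈ [0,∞) ∪ {∞}. Suppose the program is consistent and satisfies the Slater-type condition of Assumption 2. If 𝒥 = 𝒥(x) and sup{ H(u) : u ∈ [0,∞) } > 0, then Z* = +∞; if 𝒥 = 𝒥(x) and sup{ H(u) : u ∈ [0,∞) } ≤ 0, then Z* = 0. -/
open MeasureTheory Filter Set Topology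
open scoped ENNReal

/-- Membership in `𝒬(ℝ⁺)`: a finite nonnegative Borel measure on `[0,∞)`,
encoded as a finite measure on `ℝ` giving no mass to the negative reals. -/
def QRp (μ : Measure ℝ) : Prop :=
  IsFiniteMeasure μ ∧ μ (Set.Iio 0) = 0

/-- The signed integral `∫ f dμ` with values in the extended reals, defined as the difference
of the lower integrals of the positive and negative parts of `f`. -/
noncomputable def eInt (f : ℝ → ℝ) (μ : Measure ℝ) : EReal :=
  ((∫⁻ x, ENNReal.ofReal (f x) ∂μ : ℝ≥0∞) : EReal)
    - ((∫⁻ x, ENNReal.ofReal (-(f x)) ∂μ : ℝ≥0∞) : EReal)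

/-- The optimal value (in the extended reals, `⊥` if infeasible) of the moment problem
`sup { ∫ H dP : ∫ G_j dP ≤ γ_j (j ∈ J), P ∈ 𝒬(ℝ⁺) }`. -/
noncomputable def primalVal (J : Finset ℕ) (H : ℝ → ℝ) (G : ℕ → ℝ → ℝ) (γ : ℕ → ℝ) : EReal :=
  sSup { z : EReal | ∃ μ : Measure ℝ, QRp μ ∧
    (∀ j ∈ J, eInt (G j) μ ≤ ((γ j : ℝ) : EReal)) ∧ z = eInt H μ }

/-- The index `i ∈ J` is *redundant* at `x` (where the filter `l` is `𝓝 x` for `x ∈ [0,∞)` or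
`atTop` for `x = ∞`): there is a sequence `uₙ → x` in the support of `G i` along which
`limsup H(uₙ)/|G i(uₙ)| ≥ 0` and `limsup G j(uₙ)/|G i(uₙ)| ≤ 0` for every `j ∈ J`.
This defines the set `𝒥(x)` of the paper. -/
def Redundant {ι : Type*} (J : Finset ι) (H : ℝ → ℝ) (G : ι → ℝ → ℝ) (l : Filter ℝ)
    (i : ι) : Prop :=
  i ∈ J ∧ ∃ u : ℕ → ℝ, (∀ n, 0 ≤ u n ∧ G i (u n) ≠ 0) ∧ Filter.Tendsto u Filter.atTop l ∧
    (0 : EReal) ≤ Filter.limsup (fun n => ((H (u n) / |G i (u n)| : ℝ) : EReal)) Filter.atTop ∧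
    ∀ j ∈ J, Filter.limsup (fun n => ((G j (u n) / |G i (u n)| : ℝ) : EReal)) Filter.atTop
      ≤ (0 : EReal)

/-- The admissible filters: `𝓝 x` for some `x ∈ [0,∞)`, or `atTop` (i.e. `x = ∞`). -/
def PtFilter (l : Filter ℝ) : Prop :=
  (∃ x : ℝ, 0 ≤ x ∧ l = nhds x) ∨ l = Filter.atTop

/-- Assumption 2 of the paper (Slater-type condition): the constraint system
`{∫ G_j dP ≤ γ_j, j ∈ J}` admits a representation by measurable inequality constraints
(indices `Jt`) and equality constraints (indices `Jt'`) defining the same feasible subset of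
`𝒬(ℝ⁺)`, such that some `P ∈ 𝒬(ℝ⁺)` satisfies all the inequality constraints strictly, and the
equality right-hand sides form an interior point of the set of achievable moment vectors. -/
def SlaterCond (J : Finset ℕ) (G : ℕ → ℝ → ℝ) (γ : ℕ → ℝ) : Prop :=
  ∃ (Jt Jt' : Finset ℕ) (Gt : ℕ → ℝ → ℝ) (γt : ℕ → ℝ),
    (∀ j ∈ Jt ∪ Jt', Measurable (Gt j)) ∧
    (∀ μ : Measure ℝ, QRp μ →
      ((∀ j ∈ J, eInt (G j) μ ≤ ((γ j : ℝ) : EReal)) ↔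
        ((∀ j ∈ Jt, eInt (Gt j) μ ≤ ((γt j : ℝ) : EReal)) ∧
         (∀ j ∈ Jt', eInt (Gt j) μ = ((γt j : ℝ) : EReal))))) ∧
    (∃ μ : Measure ℝ, QRp μ ∧ ∀ j ∈ Jt, eInt (Gt j) μ < ((γt j : ℝ) : EReal)) ∧
    ((fun j : ↥Jt' => γt j) ∈ interior {v : ↥Jt' → ℝ | ∃ μ : Measure ℝ, QRp μ ∧
      ∀ j : ↥Jt', eInt (Gt (j : ℕ)) μ = ((v j : ℝ) : EReal)})

lemma ofReal_eq_max (y : ℝ) : ENNReal.ofReal y = ENNReal.ofReal (max y 0) := by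
  rcases le_total y 0 with h | h
  · rw [ENNReal.ofReal_eq_zero.mpr h, max_eq_right h, ENNReal.ofReal_zero]
  · rw [max_eq_left h]

lemma eInt_sum (K : Finset ℕ) (P W : ℕ → ℝ) (hW : ∀ k ∈ K, 0 ≤ W k) (f : ℝ → ℝ) :
    eInt f (∑ k ∈ K, ENNReal.ofReal (W k) • Measure.dirac (P k))
      = ((∑ k ∈ K, W k * f (P k) : ℝ) : EReal) := by
  have hpos : ∫⁻ x, ENNReal.ofReal (f x) ∂(∑ k ∈ K, ENNReal.ofReal (W k) • Measure.dirac (P k))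
      = ENNReal.ofReal (∑ k ∈ K, W k * max (f (P k)) 0) := by
    rw [lintegral_finset_sum_measure, ENNReal.ofReal_sum_of_nonneg (fun k hk =>
      mul_nonneg (hW k hk) (le_max_right _ _))]
    refine Finset.sum_congr rfl fun k hk => ?_
    rw [lintegral_smul_measure, lintegral_dirac, ENNReal.ofReal_mul (hW k hk),
      ofReal_eq_max (f (P k)), smul_eq_mul]
  have hneg : ∫⁻ x, ENNReal.ofReal (-(f x)) ∂(∑ k ∈ K, ENNReal.ofReal (W k) • Measure.dirac (P k))
      = ENNReal.ofReal (∑ k ∈ K, W k * max (-(f (P k))) 0) := by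
    rw [lintegral_finset_sum_measure, ENNReal.ofReal_sum_of_nonneg (fun k hk =>
      mul_nonneg (hW k hk) (le_max_right _ _))]
    refine Finset.sum_congr rfl fun k hk => ?_
    rw [lintegral_smul_measure, lintegral_dirac, ENNReal.ofReal_mul (hW k hk),
      ofReal_eq_max (-(f (P k))), smul_eq_mul]
  have hSA : (0:ℝ) ≤ ∑ k ∈ K, W k * max (f (P k)) 0 :=
    Finset.sum_nonneg fun k hk => mul_nonneg (hW k hk) (le_max_right _ _)
  have hSB : (0:ℝ) ≤ ∑ k ∈ K, W k * max (-(f (P k))) 0 :=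
    Finset.sum_nonneg fun k hk => mul_nonneg (hW k hk) (le_max_right _ _)
  rw [eInt, hpos, hneg, EReal.coe_ennreal_ofReal, EReal.coe_ennreal_ofReal,
    max_eq_left hSA, max_eq_left hSB, ← EReal.coe_sub, ← Finset.sum_sub_distrib]
  norm_cast
  refine Finset.sum_congr rfl fun k hk => ?_
  rcases le_total (f (P k)) 0 with h | h
  · rw [max_eq_right h, max_eq_left (by linarith)]; ring
  · rw [max_eq_left h, max_eq_right (by linarith)]; ring

lemma QRp_sum (K : Finset ℕ) (P W : ℕ → ℝ) (hP : ∀ k ∈ K, 0 ≤ P k) :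
    QRp (∑ k ∈ K, ENNReal.ofReal (W k) • Measure.dirac (P k)) := by
  constructor
  · refine ⟨?_⟩
    rw [Measure.finset_sum_apply]
    refine ENNReal.sum_lt_top.mpr fun k hk => ?_
    simp only [Measure.smul_apply, smul_eq_mul]
    exact ENNReal.mul_lt_top ENNReal.ofReal_lt_top (by simp)
  · rw [Measure.finset_sum_apply]
    refine Finset.sum_eq_zero fun k hk => ?_
    simp only [Measure.smul_apply, smul_eq_mul]
    rw [Measure.dirac_apply, Set.indicator_of_notMem (by simp [not_lt.mpr (hP k hk)]), mul_zero]

lemma extract (J : Finset ℕ) (H : ℝ → ℝ) (G : ℕ → ℝ → ℝ) (l : Filter ℝ)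
    (j : ℕ) (hred : Redundant J H G l j) (ε : ℝ) (hε : 0 < ε) (hε1 : ε < 1) :
    ∃ p : ℝ, 0 ≤ p ∧ G j p ≠ 0 ∧ G j p / |G j p| = -1 ∧
      (∀ k ∈ J, G k p / |G j p| ≤ ε) ∧ -ε ≤ H p / |G j p| := by
  obtain ⟨hjJ, u, hu, -, hH, hG⟩ := hred
  have hEv : ∀ᶠ n in Filter.atTop, ∀ k ∈ J,
      ((G k (u n) / |G j (u n)| : ℝ) : EReal) < ((ε:ℝ) : EReal) := by
    rw [Filter.eventually_all_finset]
    intro k hk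
    exact Filter.eventually_lt_of_limsup_lt (lt_of_le_of_lt (hG k hk) (by exact_mod_cast hε))
  have hFr : ∃ᶠ n in Filter.atTop,
      (((-ε : ℝ)) : EReal) < ((H (u n) / |G j (u n)| : ℝ) : EReal) := by
    refine Filter.frequently_lt_of_lt_limsup ?_ (lt_of_lt_of_le ?_ hH)
    · isBoundedDefault
    · exact_mod_cast neg_neg_iff_pos.mpr hε
  obtain ⟨n, h1, h2⟩ := (hFr.and_eventually hEv).exists
  refine ⟨u n, (hu n).1, (hu n).2, ?_, fun k hk => le_of_lt (by exact_mod_cast h2 k hk),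
    le_of_lt (by exact_mod_cast h1)⟩
  rcases (hu n).2.lt_or_gt with hneg | hpos
  · rw [abs_of_neg hneg, div_neg, div_self (hu n).2]
  · exfalso
    have := h2 j hjJ
    rw [abs_of_pos hpos, div_self (ne_of_gt hpos)] at this
    have : (1:ℝ) < ε := by exact_mod_cast this
    linarith

lemma construct (J : Finset ℕ) (H : ℝ → ℝ) (G : ℕ → ℝ → ℝ) (γ : ℕ → ℝ) (l : Filter ℝ)
    (hall : ∀ i ∈ J, Redundant J H G l i)
    (u0 : ℝ) (hu0 : 0 ≤ u0) (c : ℝ) (hc : 0 ≤ c)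
    (g Γ : ℝ) (hg : ∀ k ∈ J, G k u0 ≤ g) (hg0 : 0 ≤ g)
    (hΓ : ∀ k ∈ J, -γ k ≤ Γ) (hΓ0 : 0 ≤ Γ)
    (ε : ℝ) (hε : 0 < ε) (hε2 : (J.card : ℝ) * ε ≤ 1/2) :
    ∃ μ : Measure ℝ, QRp μ ∧ (∀ k ∈ J, eInt (G k) μ ≤ ((γ k : ℝ) : EReal)) ∧
      ∃ v : ℝ, eInt H μ = (v : EReal) ∧
        c * H u0 - 2*(c*g+Γ) * (J.card : ℝ) * ε ≤ v := by
  set s : ℝ := 2*(c*g+Γ) with hs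
  have hs0 : 0 ≤ s := by positivity
  have hε1 : ∀ j ∈ J, ε < 1 := by
    intro j hj
    have h1 : (1:ℝ) ≤ (J.card : ℝ) := by
      exact_mod_cast Finset.card_pos.mpr ⟨j, hj⟩
    nlinarith
  have hex : ∀ j ∈ J, ∃ p : ℝ, 0 ≤ p ∧ G j p ≠ 0 ∧ G j p / |G j p| = -1 ∧
      (∀ k ∈ J, G k p / |G j p| ≤ ε) ∧ -ε ≤ H p / |G j p| :=
    fun j hj => extract J H G l j (hall j hj) ε hε (hε1 j hj)
  choose! p hp1 hp2 hp3 hp4 hp5 using hex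
  set m : ℕ := J.sup id + 1 with hm
  have hmJ : m ∉ J := by
    intro h
    have := Finset.le_sup (f := id) h
    simp only [id] at this
    omega
  set P : ℕ → ℝ := fun k => if k ∈ J then p k else u0 with hP
  set W : ℕ → ℝ := fun k => if k ∈ J then s / |G k (p k)| else c with hW
  have hWnn : ∀ k, 0 ≤ W k := by
    intro k
    simp only [hW]
    split
    · exact div_nonneg hs0 (abs_nonneg _)
    · exact hc
  have hPnn : ∀ k, 0 ≤ P k := by
    intro k
    simp only [hP]
    split
    · exact hp1 k ‹_›
    · exact hu0
  refine ⟨∑ k ∈ insert m J, ENNReal.ofReal (W k) • Measure.dirac (P k),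
    QRp_sum _ _ _ (fun k _ => hPnn k), ?_, ?_⟩
  · -- constraints
    intro k hk
    rw [eInt_sum _ _ _ (fun k _ => hWnn k)]
    refine EReal.coe_le_coe_iff.mpr ?_
    rw [Finset.sum_insert hmJ]
    have hWm : W m = c := by simp [hW, hmJ]
    have hPm : P m = u0 := by simp [hP, hmJ]
    have hterm : ∀ j ∈ J, W j * G k (P j) = s * (G k (p j) / |G j (p j)|) := by
      intro j hj
      simp only [hW, hP, if_pos hj]
      ring
    rw [hWm, hPm, Finset.sum_congr rfl hterm, ← Finset.mul_sum]
    have hsum : ∑ j ∈ J, G k (p j) / |G j (p j)| ≤ -1 + (J.card : ℝ) * ε := by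
      rw [← Finset.add_sum_erase J _ hk, hp3 k hk]
      have h1 : ∑ j ∈ J.erase k, G k (p j) / |G j (p j)| ≤ (J.erase k).card • ε :=
        Finset.sum_le_card_nsmul _ _ _ (fun j hj => hp4 j (Finset.mem_of_mem_erase hj) k hk)
      rw [nsmul_eq_mul] at h1
      have h2 : ((J.erase k).card : ℝ) ≤ (J.card : ℝ) := by
        exact_mod_cast Finset.card_le_card (Finset.erase_subset _ _)
      nlinarith
    have hGk : G k u0 ≤ g := hg k hk
    have hγk : -γ k ≤ Γ := hΓ k hk
    have hmul : s * (∑ j ∈ J, G k (p j) / |G j (p j)|) ≤ s * (-1 + (J.card:ℝ) * ε) :=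
      mul_le_mul_of_nonneg_left hsum hs0
    nlinarith [mul_le_mul_of_nonneg_left hGk hc]
  · -- objective value
    rw [eInt_sum _ _ _ (fun k _ => hWnn k)]
    refine ⟨_, rfl, ?_⟩
    rw [Finset.sum_insert hmJ]
    have hWm : W m = c := by simp [hW, hmJ]
    have hPm : P m = u0 := by simp [hP, hmJ]
    have hterm : ∀ j ∈ J, W j * H (P j) = s * (H (p j) / |G j (p j)|) := by
      intro j hj
      simp only [hW, hP, if_pos hj]
      ring
    rw [hWm, hPm, Finset.sum_congr rfl hterm, ← Finset.mul_sum]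
    have h1 : (J.card : ℝ) * (-ε) ≤ ∑ j ∈ J, H (p j) / |G j (p j)| := by
      have := Finset.card_nsmul_le_sum J (fun j => H (p j) / |G j (p j)|) (-ε)
        (fun j hj => hp5 j hj)
      rwa [nsmul_eq_mul] at this
    have hmul : s * ((J.card:ℝ) * (-ε)) ≤ s * (∑ j ∈ J, H (p j) / |G j (p j)|) :=
      mul_le_mul_of_nonneg_left h1 hs0
    nlinarith

set_option maxHeartbeats 1000000 in
/-- Trivial cases of the redundant-constraint theorem: if every constraint
index is redundant at `x` (i.e. `𝒥 = 𝒥(x)`), then the optimal value is `+∞` when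
`sup_{u ≥ 0} H(u) > 0` and `0` when `sup_{u ≥ 0} H(u) ≤ 0`. -/
theorem stmt_13 (J : Finset ℕ) (H : ℝ → ℝ) (G : ℕ → ℝ → ℝ) (γ : ℕ → ℝ)
    (hHm : Measurable H) (hGm : ∀ j ∈ J, Measurable (G j))
    (l : Filter ℝ) (hl : PtFilter l)
    (hcons : ∃ μ : Measure ℝ, QRp μ ∧ ∀ j ∈ J, eInt (G j) μ ≤ ((γ j : ℝ) : EReal))
    (hslater : SlaterCond J G γ)
    (hall : ∀ i ∈ J, Redundant J H G l i) :
    ((∃ u : ℝ, 0 ≤ u ∧ 0 < H u) → primalVal J H G γ = ⊤) ∧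
    ((∀ u : ℝ, 0 ≤ u → H u ≤ 0) → primalVal J H G γ = 0) := by
  constructor
  · rintro ⟨u0, hu0, ha⟩
    rw [primalVal, sSup_eq_top]
    intro b hb
    obtain ⟨r, hbr, -⟩ := EReal.exists_between_coe_real hb
    set N : ℝ := (J.card : ℝ) with hNdef
    have hN0 : 0 ≤ N := Nat.cast_nonneg _
    set g : ℝ := 1 + ∑ j ∈ J, |G j u0| with hgdef
    have hg1 : (1:ℝ) ≤ g := le_add_of_nonneg_right (Finset.sum_nonneg fun j _ => abs_nonneg _)
    have hg0 : (0:ℝ) ≤ g := by linarith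
    have hg : ∀ k ∈ J, G k u0 ≤ g := by
      intro k hk
      have h1 : |G k u0| ≤ ∑ j ∈ J, |G j u0| :=
        Finset.single_le_sum (f := fun j => |G j u0|) (fun j _ => abs_nonneg _) hk
      have h2 := le_abs_self (G k u0)
      linarith
    set Γ : ℝ := 1 + ∑ j ∈ J, |γ j| with hΓdef
    have hΓ0 : (0:ℝ) ≤ Γ := by
      have := Finset.sum_nonneg (fun j (_ : j ∈ J) => abs_nonneg (γ j))
      linarith
    have hΓ : ∀ k ∈ J, -γ k ≤ Γ := by
      intro k hk
      have h1 : |γ k| ≤ ∑ j ∈ J, |γ j| := Finset.single_le_sum (f := fun j => |γ j|) (fun j _ => abs_nonneg _) hk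
      have h2 := neg_abs_le (γ k)
      linarith
    set ε : ℝ := min (1/(2*(N+1))) (H u0/(4*(N+1)*g)) with hεdef
    have hε : 0 < ε := lt_min (by positivity) (by positivity)
    have hε2 : N * ε ≤ 1/2 := by
      have h1 : ε ≤ 1/(2*(N+1)) := min_le_left _ _
      have h2 : N * ε ≤ N * (1/(2*(N+1))) := mul_le_mul_of_nonneg_left h1 hN0
      have h3 : N * (1/(2*(N+1))) ≤ 1/2 := by
        rw [mul_one_div, div_le_div_iff₀ (by positivity) (by norm_num)]
        linarith
      linarith
    have hεa : 4*g*(N*ε) ≤ H u0 := by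
      have h1 : ε ≤ H u0/(4*(N+1)*g) := min_le_right _ _
      have h2 : N * ε ≤ N * (H u0/(4*(N+1)*g)) := mul_le_mul_of_nonneg_left h1 hN0
      have h3 : N * (H u0/(4*(N+1)*g)) ≤ H u0/(4*g) := by
        rw [mul_div_assoc', div_le_div_iff₀ (by positivity) (by positivity)]
        nlinarith
      have h4 : N*ε ≤ H u0/(4*g) := le_trans h2 h3
      rw [le_div_iff₀ (by positivity)] at h4
      calc 4*g*(N*ε) = N*ε*(4*g) := by ring
        _ ≤ H u0 := h4
    set c : ℝ := max 0 ((r+1+Γ)*(2/H u0)) with hcdef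
    have hc : (0:ℝ) ≤ c := le_max_left _ _
    have hc2 : r+1+Γ ≤ c * H u0 / 2 := by
      rcases le_or_gt (r+1+Γ) 0 with h | h
      · have : (0:ℝ) ≤ c * H u0 / 2 := by positivity
        linarith
      · have h1 : (r+1+Γ)*(2/H u0) ≤ c := le_max_right _ _
        have h2 : (r+1+Γ)*(2/H u0) * (H u0/2) ≤ c * (H u0/2) :=
          mul_le_mul_of_nonneg_right h1 (by positivity)
        have h3 : (r+1+Γ)*(2/H u0)*(H u0/2) = r+1+Γ := by
          field_simp
        rw [h3] at h2
        linarith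
    obtain ⟨μ, hQ, hcon, v, hv, hvb⟩ :=
      construct J H G γ l hall u0 hu0 c hc g Γ hg hg0 hΓ hΓ0 ε hε hε2
    refine ⟨(v:EReal), ⟨μ, hQ, hcon, hv.symm⟩, ?_⟩
    refine lt_trans hbr (EReal.coe_lt_coe_iff.mpr ?_)
    have key1 : c * (4*g*(N*ε)) ≤ c * H u0 := mul_le_mul_of_nonneg_left hεa hc
    have key2 : Γ * (N*ε) ≤ Γ * (1/2) := mul_le_mul_of_nonneg_left hε2 hΓ0
    nlinarith [hvb, key1, key2, hc2]
  · intro hH0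
    refine le_antisymm ?_ ?_
    · rw [primalVal]
      refine sSup_le ?_
      rintro z ⟨μ, ⟨hfin, hIio⟩, -, rfl⟩
      have hA : ∫⁻ x, ENNReal.ofReal (H x) ∂μ = 0 := by
        rw [lintegral_eq_zero_iff hHm.ennreal_ofReal, Filter.EventuallyEq,
          ae_iff]
        refine measure_mono_null (fun x hx => ?_) hIio
        simp only [Set.mem_setOf_eq] at hx
        simp only [Set.mem_Iio]
        by_contra h
        push_neg at h
        exact hx (by simpa using ENNReal.ofReal_eq_zero.mpr (hH0 x h))
      rw [eInt, hA, EReal.coe_ennreal_zero]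
      calc (0:EReal) - (∫⁻ x, ENNReal.ofReal (-(H x)) ∂μ : ℝ≥0∞) ≤ 0 - 0 :=
            EReal.sub_le_sub le_rfl (EReal.coe_ennreal_nonneg _)
        _ = 0 := by simp
    · refine le_of_forall_lt fun b hb => ?_
      obtain ⟨r, hbr, hr0⟩ := EReal.exists_between_coe_real hb
      have hrneg : r < 0 := by exact_mod_cast hr0
      set N : ℝ := (J.card : ℝ) with hNdef
      have hN0 : 0 ≤ N := Nat.cast_nonneg _
      set g : ℝ := 1 + ∑ j ∈ J, |G j 0| with hgdef
      have hg0 : (0:ℝ) ≤ g := by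
        have := Finset.sum_nonneg (fun j (_ : j ∈ J) => abs_nonneg (G j 0))
        linarith
      have hg : ∀ k ∈ J, G k 0 ≤ g := by
        intro k hk
        have h1 : |G k 0| ≤ ∑ j ∈ J, |G j 0| :=
          Finset.single_le_sum (f := fun j => |G j 0|) (fun j _ => abs_nonneg _) hk
        have h2 := le_abs_self (G k 0)
        linarith
      set Γ : ℝ := 1 + ∑ j ∈ J, |γ j| with hΓdef
      have hΓ0 : (0:ℝ) ≤ Γ := by
        have := Finset.sum_nonneg (fun j (_ : j ∈ J) => abs_nonneg (γ j))
        linarith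
      have hΓ : ∀ k ∈ J, -γ k ≤ Γ := by
        intro k hk
        have h1 : |γ k| ≤ ∑ j ∈ J, |γ j| := Finset.single_le_sum (f := fun j => |γ j|) (fun j _ => abs_nonneg _) hk
        have h2 := neg_abs_le (γ k)
        linarith
      set ε : ℝ := min (1/(2*(N+1))) ((-r)/(2*Γ*N+1)) with hεdef
      have hε : 0 < ε := by
        refine lt_min (by positivity) (div_pos (by linarith) (by positivity))
      have hε2 : N * ε ≤ 1/2 := by
        have h1 : ε ≤ 1/(2*(N+1)) := min_le_left _ _
        have h2 : N * ε ≤ N * (1/(2*(N+1))) := mul_le_mul_of_nonneg_left h1 hN0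
        have h3 : N * (1/(2*(N+1))) ≤ 1/2 := by
          rw [mul_one_div, div_le_div_iff₀ (by positivity) (by norm_num)]
          linarith
        linarith
      obtain ⟨μ, hQ, hcon, v, hv, hvb⟩ :=
        construct J H G γ l hall 0 le_rfl 0 le_rfl g Γ hg hg0 hΓ hΓ0 ε hε hε2
      have hrv : r < v := by
        have h1 : ε ≤ (-r)/(2*Γ*N+1) := min_le_right _ _
        have h2 : (2*Γ*N) * ε ≤ (2*Γ*N) * ((-r)/(2*Γ*N+1)) :=
          mul_le_mul_of_nonneg_left h1 (by positivity)
        have h3 : (2*Γ*N)*((-r)/(2*Γ*N+1)) < -r := by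
          rw [mul_div_assoc', div_lt_iff₀ (by positivity)]
          nlinarith
        have hvb' : -(2*Γ*N*ε) ≤ v := by
          calc -(2*Γ*N*ε) = 0 * H 0 - 2*(0*g+Γ)*N*ε := by ring
            _ ≤ v := hvb
        have h4 : (2*Γ*N) * ε < -r := lt_of_le_of_lt h2 h3
        linarith [hvb', h4]
      calc b < ((r:ℝ) : EReal) := hbr
        _ < ((v:ℝ) : EReal) := EReal.coe_lt_coe_iff.mpr hrv
        _ ≤ primalVal J H G γ := le_sSup ⟨μ, hQ, hcon, hv.symm⟩
end
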